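/- arXiv:1208.2463 — 2 statements merged into one kernel-verified Lean document; each statement's English description precedes it below -/
import Mathlib

section
/- For k ≥ 2, the number of contractible semistable decorated trees with k unbarred external legs a₁,…,a_k, two barred external legs b̄₁,b̄₂, and exactly k vertices equals (2k−3)!! (the double factorial). -/
open Relation

/-- A candidate decorated labeled tree: `n` vertices, `n − 1` directed edges, `k`
labeled outward external legs and `m` labeled inward external legs attached to
vertices. -/
structure LabTree (k m n : ℕ) where
  src : Fin (n - 1) → Fin n
  tgt : Fin (n - 1) → Fin n
  out : Fin k → Fin n
  inn : Fin m → Fin n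

namespace LabTree

variable {k m n : ℕ}

/-- Outward degree: outgoing edge-ends plus outward legs at `v`. -/
noncomputable def degOut (T : LabTree k m n) (v : Fin n) : ℕ :=
  Nat.card {e : Fin (n - 1) // T.src e = v} + Nat.card {i : Fin k // T.out i = v}

/-- Inward degree: incoming edge-ends plus inward legs at `v`. -/
noncomputable def degIn (T : LabTree k m n) (v : Fin n) : ℕ :=
  Nat.card {e : Fin (n - 1) // T.tgt e = v} + Nat.card {j : Fin m // T.inn j = v}

def UAdj (T : LabTree k m n) (a b : Fin n) : Prop :=
  ∃ e, (T.src e = a ∧ T.tgt e = b) ∨ (T.src e = b ∧ T.tgt e = a)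

/-- `T` is a contractible semistable decorated tree: the underlying graph is connected
(hence, having `n − 1` edges, a tree), every vertex is semistable, and every edge is
contractible. -/
def Good (T : LabTree k m n) : Prop :=
  (∀ a b : Fin n, ReflTransGen T.UAdj a b) ∧
  (∀ v : Fin n, 1 ≤ T.degIn v ∧ 1 ≤ T.degOut v ∧ 3 ≤ T.degIn v + T.degOut v) ∧
  (∀ e : Fin (n - 1), T.src e ≠ T.tgt e ∧
    (T.degOut (T.src e) = 1 ∨ T.degIn (T.tgt e) = 1))

/-- Isomorphism of decorated labeled trees: relabeling of vertices and edges preserving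
incidences and the (labeled) leg attachments. -/
def IsoRel (T T' : LabTree k m n) : Prop :=
  ∃ (σ : Fin n ≃ Fin n) (τ : Fin (n - 1) ≃ Fin (n - 1)),
    (∀ e, T'.src (τ e) = σ (T.src e)) ∧ (∀ e, T'.tgt (τ e) = σ (T.tgt e)) ∧
    (∀ i, T'.out i = σ (T.out i)) ∧ (∀ j, T'.inn j = σ (T.inn j))

end LabTree

/-- `tcount k m n` = `t_{k,m}(n)`: the number of isomorphism classes of `n`-vertex
contractible semistable decorated trees with outward legs `a₁, …, a_k` and inward legs
`b̄₁, …, b̄_m`. -/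
noncomputable def tcount (k m n : ℕ) : ℕ :=
  Nat.card (Quot (fun T T' : {T : LabTree k m n // T.Good} => LabTree.IsoRel T.1 T'.1))

/-! ### Auxiliary development -/

namespace TProof

open LabTree Function

/-! #### Generic counting helpers -/

section Helpers
variable {α β : Type*} {p : α → Prop}

lemma natCard_zero (h : ∀ a, ¬ p a) : Nat.card {a // p a} = 0 := by
  have : IsEmpty {a // p a} := ⟨fun x => h x.1 x.2⟩
  exact Nat.card_of_isEmpty

lemma natCard_one (h : ∃! a, p a) : Nat.card {a // p a} = 1 := by
  obtain ⟨a, ha, hu⟩ := h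
  exact Nat.card_eq_one_iff_exists.mpr ⟨⟨a, ha⟩, fun y => Subtype.ext (hu _ y.2)⟩

lemma natCard_two {a b : α} (hab : a ≠ b) (ha : p a) (hb : p b)
    (h : ∀ c, p c → c = a ∨ c = b) : Nat.card {x // p x} = 2 := by
  classical
  have e : {x // p x} ≃ Bool :=
    { toFun := fun x => if x.1 = a then true else false
      invFun := fun t => if t then ⟨a, ha⟩ else ⟨b, hb⟩
      left_inv := by
        rintro ⟨c, hc⟩
        rcases h c hc with rfl | rfl
        · simp
        · simp [Ne.symm hab]
      right_inv := by
        rintro (_|_) <;> simp [hab, Ne.symm hab] }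
  rw [Nat.card_congr e]
  simp

lemma sum_natCard_fiber [Fintype α] [Fintype β] [DecidableEq β] (f : α → β) :
    ∑ b : β, Nat.card {a // f a = b} = Fintype.card α := by
  classical
  have h : ∀ b, Nat.card {a // f a = b} = (Finset.univ.filter (fun a => f a = b)).card := by
    intro b; rw [Nat.card_eq_fintype_card, Fintype.card_subtype]
  simp_rw [h]
  rw [← Finset.card_eq_sum_card_fiberwise (fun x _ => Finset.mem_univ (f x))]
  rfl

lemma all_eq_of_sum {s : Finset α} {f : α → ℕ} {c : ℕ} (h : ∀ i ∈ s, c ≤ f i)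
    (hs : ∑ i ∈ s, f i = c * s.card) : ∀ i ∈ s, f i = c := by
  have h2 : ∑ _i ∈ s, (c : ℕ) = ∑ i ∈ s, f i := by
    rw [hs, Finset.sum_const, smul_eq_mul, mul_comm]
  intro i hi
  exact ((Finset.sum_eq_sum_iff_of_le h).mp h2 i hi).symm

end Helpers

/-- Parent relation: `b` is the parent of `a`. -/
def Pa {k m n : ℕ} (T : LabTree k m n) (a b : Fin n) : Prop :=
  ∃ e, T.tgt e = a ∧ T.src e = b

/-- Structural characterization of contractible semistable trees with `m = 2`, `n = k`. -/
def GoodStruct {k : ℕ} (T : LabTree k 2 k) : Prop :=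
  ∃ w : Fin k,
    T.inn 0 = w ∧ T.inn 1 = w ∧
    Function.Injective T.tgt ∧ (∀ e, T.tgt e ≠ w) ∧
    (∀ v, v ≠ w → ∃ e, T.tgt e = v) ∧
    (∀ v, ReflTransGen (Pa T) v w) ∧
    (∀ v, T.degOut v = if v = w then 1 else 2)

/-- Abstract rooted structure: root, parent map, leg assignment. -/
structure UStr (k : ℕ) where
  w : Fin k
  par : Fin k → Fin k
  out : Fin k → Fin k

noncomputable def ccount {k : ℕ} (u : UStr k) (v : Fin k) : ℕ :=
  Nat.card {x : Fin k // x ≠ u.w ∧ u.par x = v}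

noncomputable def lcount {k : ℕ} (u : UStr k) (v : Fin k) : ℕ :=
  Nat.card {i : Fin k // u.out i = v}

def UGood {k : ℕ} (u : UStr k) : Prop :=
  u.par u.w = u.w ∧
  (∀ v, ∃ j, u.par^[j] v = u.w) ∧
  (∀ v, ccount u v + lcount u v = if v = u.w then 1 else 2)

/-! #### The parent function -/

section Parent
variable {k m n : ℕ}

noncomputable def pf (T : LabTree k m n) : Fin n → Fin n :=
  fun v => if h : ∃ e, T.tgt e = v then T.src h.choose else v

lemma pf_eq_src {T : LabTree k m n} (hinj : Function.Injective T.tgt)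
    {e : Fin (n-1)} {v : Fin n} (he : T.tgt e = v) : pf T v = T.src e := by
  have h : ∃ e, T.tgt e = v := ⟨e, he⟩
  have hch : h.choose = e := hinj (h.choose_spec.trans he.symm)
  simp only [pf, dif_pos h, hch]

lemma pf_eq_self {T : LabTree k m n} {v : Fin n} (h : ¬ ∃ e, T.tgt e = v) :
    pf T v = v := dif_neg h

lemma pa_pf {T : LabTree k m n} {v : Fin n} (h : ∃ e, T.tgt e = v) :
    Pa T v (pf T v) :=
  ⟨h.choose, h.choose_spec, by simp only [pf, dif_pos h]⟩

lemma iterate_of_reach {T : LabTree k m n} (hinj : Function.Injective T.tgt)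
    {v w : Fin n} (h : ReflTransGen (Pa T) v w) : ∃ j, (pf T)^[j] v = w := by
  induction h using ReflTransGen.head_induction_on with
  | refl => exact ⟨0, rfl⟩
  | @head a c hac _ ih =>
      obtain ⟨j, hj⟩ := ih
      obtain ⟨e, he, hsrc⟩ := hac
      refine ⟨j + 1, ?_⟩
      rw [Function.iterate_succ_apply, pf_eq_src hinj he, hsrc, hj]

lemma reach_of_iterate {T : LabTree k m n} {v w : Fin n} {j : ℕ}
    (h : (pf T)^[j] v = w) : ReflTransGen (Pa T) v w := by
  induction j generalizing v with
  | zero => exact h ▸ ReflTransGen.refl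
  | succ j ih =>
      rw [Function.iterate_succ_apply] at h
      by_cases hx : ∃ e, T.tgt e = v
      · exact ReflTransGen.head (pa_pf hx) (ih h)
      · rw [pf_eq_self hx] at h; exact ih h

end Parent

theorem good_iff_struct {k : ℕ} (hk : 2 ≤ k) (T : LabTree k 2 k) :
    T.Good ↔ GoodStruct T := by
  classical
  constructor
  · rintro ⟨hconn, hss, hctr⟩
    have hsumIn : ∑ v : Fin k, T.degIn v = (k - 1) + 2 := by
      unfold LabTree.degIn
      rw [Finset.sum_add_distrib, sum_natCard_fiber, sum_natCard_fiber]
      simp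
    have hsumOut : ∑ v : Fin k, T.degOut v = (k - 1) + k := by
      unfold LabTree.degOut
      rw [Finset.sum_add_distrib, sum_natCard_fiber, sum_natCard_fiber]
      simp
    have hdeg3 : ∀ v : Fin k, T.degIn v + T.degOut v = 3 := by
      have hle : ∀ v ∈ Finset.univ, 3 ≤ T.degIn v + T.degOut v := fun v _ => (hss v).2.2
      have hsum : ∑ v : Fin k, (T.degIn v + T.degOut v)
          = 3 * (Finset.univ : Finset (Fin k)).card := by
        rw [Finset.sum_add_distrib, hsumIn, hsumOut]
        simp
        omega
      exact fun v => all_eq_of_sum hle hsum v (Finset.mem_univ v)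
    have hIle2 : ∀ v, T.degIn v ≤ 2 := fun v => by
      have := hdeg3 v; have := (hss v).2.1; omega
    have hex : ∃ w, T.degIn w = 2 := by
      by_contra hno
      push_neg at hno
      have h1 : ∀ v ∈ (Finset.univ : Finset (Fin k)), T.degIn v = 1 := fun v _ => by
        have := (hss v).1; have := hIle2 v; have := hno v; omega
      have h2 : ∑ v : Fin k, T.degIn v = (Finset.univ : Finset (Fin k)).card := by
        rw [Finset.sum_congr rfl h1]; simp
      rw [hsumIn] at h2; simp at h2; omega
    obtain ⟨w, hw2⟩ := hex
    have hone : ∀ v, v ≠ w → T.degIn v = 1 := by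
      have hsplit := Finset.add_sum_erase Finset.univ T.degIn (Finset.mem_univ w)
      have hc : (Finset.univ.erase w).card = k - 1 := by
        rw [Finset.card_erase_of_mem (Finset.mem_univ w)]
        simp
      have herase : ∑ x ∈ Finset.univ.erase w, T.degIn x = 1 * (Finset.univ.erase w).card := by
        rw [hc, one_mul, hsumIn] at *
        omega
      intro v hv
      exact all_eq_of_sum (fun i _ => (hss i).1) herase v
        (Finset.mem_erase.mpr ⟨hv, Finset.mem_univ v⟩)
    have hnoedge : ∀ e, T.tgt e ≠ w := by
      intro e he
      rcases (hctr e).2 with h1 | h1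
      · have h2 : T.degIn (T.src e) = 2 := by have := hdeg3 (T.src e); have := (hss (T.src e)).1; omega
        have h3 : T.src e = w := by
          by_contra hne; have := hone _ hne; omega
        exact (hctr e).1 (h3.trans he.symm)
      · rw [he, hw2] at h1; omega
    have hinnw : ∀ j : Fin 2, T.inn j = w := by
      have hcard : Nat.card {j : Fin 2 // T.inn j = w} = 2 := by
        have h0 : Nat.card {e // T.tgt e = w} = 0 := natCard_zero (fun e => hnoedge e)
        have h2 := hw2
        unfold LabTree.degIn at h2
        omega
      intro j
      by_contra hj
      have hfil : (Finset.univ.filter (fun j : Fin 2 => T.inn j = w)).card = 2 := by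
        rw [← Fintype.card_subtype, ← Nat.card_eq_fintype_card]; exact hcard
      have hsub : Finset.univ.filter (fun j : Fin 2 => T.inn j = w) ⊆ Finset.univ.erase j := by
        intro x hx
        rcases Finset.mem_filter.mp hx with ⟨_, hx2⟩
        exact Finset.mem_erase.mpr ⟨fun h => hj (h ▸ hx2), Finset.mem_univ x⟩
      have hle := Finset.card_le_card hsub
      rw [hfil, Finset.card_erase_of_mem (Finset.mem_univ j)] at hle
      simp at hle
    have hfib1 : ∀ v, v ≠ w → Nat.card {e // T.tgt e = v} = 1 := by
      intro v hv
      have h1 := hone v hv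
      have h0 : Nat.card {j : Fin 2 // T.inn j = v} = 0 :=
        natCard_zero (fun j hj => hv (hj ▸ hinnw j))
      unfold LabTree.degIn at h1
      omega
    have hinj : Function.Injective T.tgt := by
      intro e1 e2 h12
      have hc := hfib1 _ (hnoedge e1)
      obtain ⟨x, hx⟩ := Nat.card_eq_one_iff_exists.mp hc
      have ha := hx ⟨e1, rfl⟩
      have hb := hx ⟨e2, h12.symm⟩
      exact congrArg Subtype.val (ha.trans hb.symm)
    have hsurj : ∀ v, v ≠ w → ∃ e, T.tgt e = v := by
      intro v hv
      obtain ⟨x, _⟩ := Nat.card_eq_one_iff_exists.mp (hfib1 v hv)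
      exact ⟨x.1, x.2⟩
    have hreach : ∀ v, ReflTransGen (Pa T) v w := by
      intro v
      have h := hconn w v
      induction h with
      | refl => exact ReflTransGen.refl
      | @tail b c hwb hbc ih =>
          obtain ⟨e, he⟩ := hbc
          rcases he with ⟨hs, ht⟩ | ⟨hs, ht⟩
          · exact ReflTransGen.head ⟨e, ht, hs⟩ ih
          · rcases ih.cases_head with h1 | ⟨d, hd, hdw⟩
            · exact absurd (h1 ▸ ht) (hnoedge e)
            · obtain ⟨e', he', hs'⟩ := hd
              have hee : e' = e := hinj (he'.trans ht.symm)
              have hdc : d = c := by rw [← hs', hee, hs]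
              exact hdc ▸ hdw
    have hdo : ∀ v, T.degOut v = if v = w then 1 else 2 := by
      intro v
      by_cases hv : v = w
      · rw [if_pos hv]; subst hv; have := hdeg3 v; omega
      · rw [if_neg hv]; have := hdeg3 v; have := hone v hv; omega
    exact ⟨w, hinnw 0, hinnw 1, hinj, hnoedge, hsurj, hreach, hdo⟩
  · rintro ⟨w, h0, h1, hinj, hnw, hsurj, hreach, hdo⟩
    have hsne : ∀ e, T.src e ≠ T.tgt e := by
      intro e heq
      have hpf : pf T (T.tgt e) = T.tgt e := (pf_eq_src hinj rfl).trans heq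
      obtain ⟨j, hj⟩ := iterate_of_reach hinj (hreach (T.tgt e))
      rw [Function.iterate_fixed hpf] at hj
      exact hnw e hj
    have hall : ∀ j : Fin 2, T.inn j = w := by
      intro j
      rcases j with ⟨jv, hjv⟩
      interval_cases jv
      · exact h0
      · exact h1
    have hdegin : ∀ v, T.degIn v = if v = w then 2 else 1 := by
      intro v
      unfold LabTree.degIn
      by_cases hv : v = w
      · subst hv
        rw [natCard_zero (fun e => hnw e), Nat.card_congr (Equiv.subtypeUnivEquiv hall)]
        simp
      · rw [natCard_one ⟨(hsurj v hv).choose, (hsurj v hv).choose_spec,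
              fun y hy => hinj (hy.trans (hsurj v hv).choose_spec.symm)⟩,
            natCard_zero (fun j (hj : T.inn j = v) => hv (hj ▸ hall j))]
        simp [hv]
    refine ⟨?_, ?_, ?_⟩
    · intro a b
      have hmono : ∀ x y, Pa T x y → T.UAdj x y := fun x y ⟨e, h1, h2⟩ => ⟨e, Or.inr ⟨h2, h1⟩⟩
      have ha : ReflTransGen T.UAdj a w := ReflTransGen.mono hmono _ _ (hreach a)
      have hb : ReflTransGen T.UAdj b w := ReflTransGen.mono hmono _ _ (hreach b)
      have hsymm : Symmetric T.UAdj := fun x y ⟨e, h⟩ => ⟨e, h.symm⟩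
      exact ha.trans ((@ReflTransGen.stdSymm _ _ ⟨hsymm⟩).symm _ _ hb)
    · intro v
      rw [hdegin v, hdo v]
      by_cases hv : v = w <;> simp [hv]
    · intro e
      refine ⟨hsne e, Or.inr ?_⟩
      rw [hdegin, if_neg (hnw e)]

lemma lt_ext {k m n : ℕ} {T T' : LabTree k m n} (h1 : ∀ e, T.src e = T'.src e)
    (h2 : ∀ e, T.tgt e = T'.tgt e) (h3 : ∀ i, T.out i = T'.out i)
    (h4 : ∀ j, T.inn j = T'.inn j) : T = T' := by
  cases T; cases T'
  simp only [LabTree.mk.injEq]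
  exact ⟨funext h1, funext h2, funext h3, funext h4⟩

/-- Every vertex has a leg among its iterated descendants. -/
lemma exists_leg_anc {k : ℕ} {T : LabTree k 2 k} (hG : GoodStruct T) :
    ∀ v, ∃ i j, (pf T)^[j] (T.out i) = v := by
  classical
  obtain ⟨w, h0, h1, hinj, hnw, hsurj, hreach, hdo⟩ := hG
  have hex : ∀ v, ∃ j, (pf T)^[j] v = w := fun v => iterate_of_reach hinj (hreach v)
  set d : Fin k → ℕ := fun v => Nat.find (hex v) with hd
  have hdspec : ∀ v, (pf T)^[d v] v = w := fun v => Nat.find_spec (hex v)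
  have hbound : ∀ v, d v ≤ k - 1 := by
    intro v
    by_contra hlt
    push_neg at hlt
    have key : ∀ a b : ℕ, a < b → b ≤ d v → (pf T)^[a] v ≠ (pf T)^[b] v := by
      intro a b hab hbd heq
      have h2 : (pf T)^[(d v - b) + a] v = w := by
        rw [Function.iterate_add_apply, heq, ← Function.iterate_add_apply]
        have : d v - b + b = d v := by omega
        rw [this]
        exact hdspec v
      have hlt2 : d v - b + a < d v := by omega
      exact Nat.find_min (hex v) hlt2 h2
    have hchain : Function.Injective (fun j : Fin (d v + 1) => (pf T)^[(j : ℕ)] v) := by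
      intro a b hab
      by_contra hne
      have hne' : (a : ℕ) ≠ (b : ℕ) := fun h => hne (Fin.ext h)
      rcases hne'.lt_or_gt with h | h
      · exact key a b h (by omega) hab
      · exact key b a h (by omega) hab.symm
    have := Fintype.card_le_of_injective _ hchain
    simp only [Fintype.card_fin] at this
    omega
  have main : ∀ b v, k - d v ≤ b → ∃ i j, (pf T)^[j] (T.out i) = v := by
    intro b
    induction b with
    | zero =>
        intro v hv
        have := hbound v
        have := v.pos
        omega
    | succ b ih =>
        intro v hv
        by_cases hleg : ∃ i, T.out i = v
        · obtain ⟨i, hi⟩ := hleg; exact ⟨i, 0, hi⟩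
        · have hposn : 0 < Nat.card {e // T.src e = v} := by
            have h2 := hdo v
            have h3 : Nat.card {i // T.out i = v} = 0 := natCard_zero (fun i hi => hleg ⟨i, hi⟩)
            unfold LabTree.degOut at h2
            rw [h3, add_zero] at h2
            rw [h2]
            split <;> omega
          obtain ⟨⟨e, he⟩⟩ := (Nat.card_pos_iff.mp hposn).1
          have hpx : pf T (T.tgt e) = v := by rw [pf_eq_src hinj rfl, he]
          have hxw : T.tgt e ≠ w := hnw e
          set x := T.tgt e with hxdef
          have hdx : d x = d v + 1 := by
            have hne0 : d x ≠ 0 := fun h => hxw (by have h5 := hdspec x; rw [h] at h5; exact h5)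
            obtain ⟨dd, hdd⟩ := Nat.exists_eq_succ_of_ne_zero hne0
            have h2 : (pf T)^[dd] v = w := by
              have h5 := hdspec x
              rw [hdd, Function.iterate_succ_apply, hpx] at h5
              exact h5
            have h3 : d v ≤ dd := Nat.find_le h2
            have h4 : (pf T)^[d v + 1] x = w := by
              rw [Function.iterate_succ_apply, hpx]; exact hdspec v
            have h5 : d x ≤ d v + 1 := Nat.find_le h4
            omega
          obtain ⟨i, j, hij⟩ := ih x (by have := hbound v; omega)
          exact ⟨i, j + 1, by rw [Function.iterate_succ_apply', hij, hpx]⟩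
  intro v
  exact main (k - d v) v le_rfl

/-- Rigidity: good trees have no nontrivial automorphisms. -/
lemma rigid {k : ℕ} {T : LabTree k 2 k} (hGs : GoodStruct T)
    {σ : Fin k ≃ Fin k} {τ : Fin (k-1) ≃ Fin (k-1)}
    (h1 : ∀ e, T.src (τ e) = σ (T.src e)) (h2 : ∀ e, T.tgt (τ e) = σ (T.tgt e))
    (h3 : ∀ i, T.out i = σ (T.out i)) (h4 : ∀ j, T.inn j = σ (T.inn j)) :
    σ = Equiv.refl _ ∧ τ = Equiv.refl _ := by
  obtain ⟨w, hw0, hw1, hinj, hnw, hsurj, hreach, hdo⟩ := hGs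
  have hcomm : ∀ v, σ (pf T v) = pf T (σ v) := by
    intro v
    by_cases hx : ∃ e, T.tgt e = v
    · obtain ⟨e, he⟩ := hx
      have he2 : T.tgt (τ e) = σ v := by rw [h2, he]
      rw [pf_eq_src hinj he, pf_eq_src hinj he2, h1]
    · have hx2 : ¬ ∃ e', T.tgt e' = σ v := by
        rintro ⟨e', he'⟩
        refine hx ⟨τ.symm e', ?_⟩
        have h5 := h2 (τ.symm e')
        rw [Equiv.apply_symm_apply] at h5
        exact σ.injective (by rw [← h5, he'])
      rw [pf_eq_self hx, pf_eq_self hx2]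
  have hcommj : ∀ j v, σ ((pf T)^[j] v) = (pf T)^[j] (σ v) := by
    intro j
    induction j with
    | zero => exact fun v => rfl
    | succ j ih =>
        intro v
        rw [Function.iterate_succ_apply, Function.iterate_succ_apply, ih, hcomm]
  have hfix : ∀ v, σ v = v := by
    intro v
    obtain ⟨i, j, hij⟩ := exists_leg_anc ⟨w, hw0, hw1, hinj, hnw, hsurj, hreach, hdo⟩ v
    rw [← hij, hcommj, ← h3]
  refine ⟨Equiv.ext hfix, Equiv.ext fun e => hinj ?_⟩
  rw [h2, hfix]
  exact rfl

lemma iso_symm {k m n : ℕ} {T T' : LabTree k m n} (h : T.IsoRel T') : T'.IsoRel T := by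
  obtain ⟨σ, τ, h1, h2, h3, h4⟩ := h
  refine ⟨σ.symm, τ.symm, fun e => ?_, fun e => ?_, fun i => ?_, fun j => ?_⟩
  · apply σ.injective; rw [Equiv.apply_symm_apply, ← h1, Equiv.apply_symm_apply]
  · apply σ.injective; rw [Equiv.apply_symm_apply, ← h2, Equiv.apply_symm_apply]
  · apply σ.injective; rw [Equiv.apply_symm_apply, ← h3]
  · apply σ.injective; rw [Equiv.apply_symm_apply, ← h4]

/-- Transport of goodness along isomorphism. -/
lemma good_of_iso {k m n : ℕ} {T T' : LabTree k m n} (h : T.IsoRel T') (hG : T.Good) :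
    T'.Good := by
  obtain ⟨σ, τ, h1, h2, h3, h4⟩ := h
  obtain ⟨hconn, hss, hctr⟩ := hG
  have hdi : ∀ v, T'.degIn (σ v) = T.degIn v := by
    intro v
    unfold LabTree.degIn
    have e1 : {e // T.tgt e = v} ≃ {e' // T'.tgt e' = σ v} :=
      Equiv.subtypeEquiv τ (fun e => by rw [h2 e]; exact (Equiv.apply_eq_iff_eq σ).symm)
    have e2 : {j // T.inn j = v} ≃ {j' // T'.inn j' = σ v} :=
      Equiv.subtypeEquiv (Equiv.refl _) (fun j => by
        simp only [Equiv.refl_apply]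
        rw [h4 j]
        exact (Equiv.apply_eq_iff_eq σ).symm)
    rw [Nat.card_congr e1, Nat.card_congr e2]
  have hdo : ∀ v, T'.degOut (σ v) = T.degOut v := by
    intro v
    unfold LabTree.degOut
    have e1 : {e // T.src e = v} ≃ {e' // T'.src e' = σ v} :=
      Equiv.subtypeEquiv τ (fun e => by rw [h1 e]; exact (Equiv.apply_eq_iff_eq σ).symm)
    have e2 : {i // T.out i = v} ≃ {i' // T'.out i' = σ v} :=
      Equiv.subtypeEquiv (Equiv.refl _) (fun i => by
        simp only [Equiv.refl_apply]
        rw [h3 i]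
        exact (Equiv.apply_eq_iff_eq σ).symm)
    rw [Nat.card_congr e1, Nat.card_congr e2]
  have hmap : ∀ a b, T.UAdj a b → T'.UAdj (σ a) (σ b) := by
    rintro a b ⟨e, ⟨hs, ht⟩ | ⟨hs, ht⟩⟩
    · exact ⟨τ e, Or.inl ⟨by rw [h1, hs], by rw [h2, ht]⟩⟩
    · exact ⟨τ e, Or.inr ⟨by rw [h1, hs], by rw [h2, ht]⟩⟩
  refine ⟨?_, ?_, ?_⟩
  · intro a b
    have h5 := ReflTransGen.lift (r := T.UAdj) (p := T'.UAdj) σ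
      (fun x y hxy => hmap x y hxy) _ _ (hconn (σ.symm a) (σ.symm b))
    simpa [Function.onFun] using h5
  · intro v
    have h5 := hss (σ.symm v)
    have h6 := hdi (σ.symm v)
    have h7 := hdo (σ.symm v)
    rw [Equiv.apply_symm_apply] at h6 h7
    rw [h6, h7]
    exact h5
  · intro e'
    have hs' : T'.src e' = σ (T.src (τ.symm e')) := by rw [← h1, Equiv.apply_symm_apply]
    have ht' : T'.tgt e' = σ (T.tgt (τ.symm e')) := by rw [← h2, Equiv.apply_symm_apply]
    constructor
    · rw [hs', ht']
      exact fun h => (hctr (τ.symm e')).1 (σ.injective h)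
    · rcases (hctr (τ.symm e')).2 with h5 | h5
      · left; rw [hs', hdo]; exact h5
      · right; rw [ht', hdi]; exact h5

/-! #### The group action and orbit counting -/

section Action

variable {k : ℕ}

abbrev Gk (k : ℕ) := Equiv.Perm (Fin k) × Equiv.Perm (Fin (k - 1))

def act (g : Gk k) (T : LabTree k 2 k) : LabTree k 2 k :=
  ⟨fun e => g.1 (T.src (g.2⁻¹ e)), fun e => g.1 (T.tgt (g.2⁻¹ e)),
   fun i => g.1 (T.out i), fun j => g.1 (T.inn j)⟩

lemma iso_act (g : Gk k) (T : LabTree k 2 k) : T.IsoRel (act g T) := by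
  refine ⟨g.1, g.2, fun e => ?_, fun e => ?_, fun i => rfl, fun j => rfl⟩ <;>
    simp [act, Equiv.Perm.inv_def]

lemma act_eq_of_iso {T T' : LabTree k 2 k} (h : T.IsoRel T') : ∃ g : Gk k, act g T = T' := by
  obtain ⟨σ, τ, h1, h2, h3, h4⟩ := h
  refine ⟨(σ, τ), lt_ext (fun e => ?_) (fun e => ?_) (fun i => (h3 i).symm) (fun j => (h4 j).symm)⟩
  · show σ (T.src (τ⁻¹ e)) = T'.src e
    rw [← h1 (τ⁻¹ e), Equiv.Perm.inv_def, Equiv.apply_symm_apply]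
  · show σ (T.tgt (τ⁻¹ e)) = T'.tgt e
    rw [← h2 (τ⁻¹ e), Equiv.Perm.inv_def, Equiv.apply_symm_apply]

lemma act_one (T : LabTree k 2 k) : act 1 T = T :=
  lt_ext (fun e => by simp [act]) (fun e => by simp [act]) (fun i => by simp [act])
    (fun j => by simp [act])

lemma act_mul (g h : Gk k) (T : LabTree k 2 k) : act (g * h) T = act g (act h T) :=
  lt_ext (fun e => by simp [act, mul_inv_rev]) (fun e => by simp [act, mul_inv_rev])
    (fun i => by simp [act]) (fun j => by simp [act])

end Action

theorem card_good_eq_tcount {k : ℕ} (hk : 2 ≤ k) :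
    Nat.card {T : LabTree k 2 k // T.Good}
      = tcount k 2 k * (Nat.factorial k * Nat.factorial (k - 1)) := by
  classical
  letI : MulAction (Gk k) {T : LabTree k 2 k // T.Good} :=
    { smul := fun g T => ⟨act g T.1, good_of_iso (iso_act g T.1) T.2⟩
      one_smul := fun T => Subtype.ext (act_one T.1)
      mul_smul := fun g h T => Subtype.ext (act_mul g h T.1) }
  have hsmul : ∀ (g : Gk k) (T : {T : LabTree k 2 k // T.Good}), (g • T).1 = act g T.1 :=
    fun g T => rfl
  have hstab : ∀ x : {T : LabTree k 2 k // T.Good}, MulAction.stabilizer (Gk k) x = ⊥ := by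
    intro x
    ext g
    simp only [MulAction.mem_stabilizer_iff, Subgroup.mem_bot]
    constructor
    · intro hg
      have hx : act g x.1 = x.1 := congrArg Subtype.val hg
      have h1 : ∀ e, x.1.src (g.2 e) = g.1 (x.1.src e) := by
        intro e
        conv_lhs => rw [← hx]
        show g.1 (x.1.src (g.2⁻¹ (g.2 e))) = _
        rw [Equiv.Perm.inv_def, Equiv.symm_apply_apply]
      have h2 : ∀ e, x.1.tgt (g.2 e) = g.1 (x.1.tgt e) := by
        intro e
        conv_lhs => rw [← hx]
        show g.1 (x.1.tgt (g.2⁻¹ (g.2 e))) = _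
        rw [Equiv.Perm.inv_def, Equiv.symm_apply_apply]
      have h3 : ∀ i, x.1.out i = g.1 (x.1.out i) := by
        intro i
        conv_lhs => rw [← hx]
        rfl
      have h4 : ∀ j, x.1.inn j = g.1 (x.1.inn j) := by
        intro j
        conv_lhs => rw [← hx]
        rfl
      obtain ⟨hσ, hτ⟩ := rigid ((good_iff_struct hk x.1).mp x.2) h1 h2 h3 h4
      exact Prod.ext hσ hτ
    · rintro rfl
      exact one_smul _ x
  have hQ : {T : LabTree k 2 k // T.Good}
      ≃ MulAction.orbitRel.Quotient (Gk k) {T : LabTree k 2 k // T.Good} × Gk k := by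
    refine (MulAction.selfEquivSigmaOrbits (Gk k) _).trans
      ((Equiv.sigmaCongrRight (fun ω => ?_)).trans (Equiv.sigmaEquivProd _ _))
    refine (MulAction.orbitEquivQuotientStabilizer (Gk k) _).trans ?_
    refine (Equiv.cast ?_).trans (QuotientGroup.quotientBot (G := Gk k)).toEquiv
    rw [hstab]
  have hcard : Nat.card {T : LabTree k 2 k // T.Good}
      = Nat.card (MulAction.orbitRel.Quotient (Gk k) {T : LabTree k 2 k // T.Good})
        * Nat.card (Gk k) := by
    rw [Nat.card_congr hQ, Nat.card_prod]
  have hG : Nat.card (Gk k) = Nat.factorial k * Nat.factorial (k - 1) := by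
    rw [Nat.card_prod, Nat.card_eq_fintype_card, Nat.card_eq_fintype_card,
      Fintype.card_perm, Fintype.card_perm, Fintype.card_fin, Fintype.card_fin]
  have htc : tcount k 2 k
      = Nat.card (MulAction.orbitRel.Quotient (Gk k) {T : LabTree k 2 k // T.Good}) := by
    unfold tcount
    refine Nat.card_congr (Quot.congr (Equiv.refl _) ?_)
    intro a b
    show a.1.IsoRel b.1 ↔ a ∈ MulAction.orbit (Gk k) b
    rw [MulAction.mem_orbit_iff]
    constructor
    · intro hiso
      obtain ⟨g, hg⟩ := act_eq_of_iso hiso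
      refine ⟨g⁻¹, ?_⟩
      have hb : g • a = b := Subtype.ext hg
      rw [← hb, inv_smul_smul]
    · rintro ⟨g, hg⟩
      have ha : act g b.1 = a.1 := congrArg Subtype.val hg
      exact iso_symm (ha ▸ iso_act g b.1)
  rw [hcard, htc, hG]


noncomputable def punch {k : ℕ} (w : Fin k) : {v : Fin k // v ≠ w} ≃ Fin (k - 1) :=
  Fintype.equivFinOfCardEq (by
    have h : Fintype.card {v : Fin k // ¬ v = w} = Fintype.card (Fin k) - 1 := by
      rw [Fintype.card_subtype_compl, Fintype.card_subtype_eq]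
    simpa using h)

lemma spec_of_good {k : ℕ} (hk : 2 ≤ k) {T : LabTree k 2 k} (hT : T.Good) :
    T.inn 1 = T.inn 0 ∧ Function.Injective T.tgt ∧ (∀ e, T.tgt e ≠ T.inn 0) ∧
    (∀ v, v ≠ T.inn 0 → ∃ e, T.tgt e = v) ∧ (∀ v, ReflTransGen (Pa T) v (T.inn 0)) ∧
    (∀ v, T.degOut v = if v = T.inn 0 then 1 else 2) := by
  obtain ⟨w, h0, h1, hinj, hnw, hsurj, hreach, hdo⟩ := (good_iff_struct hk T).mp hT
  subst h0
  exact ⟨h1, hinj, hnw, hsurj, hreach, hdo⟩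

lemma ugood_of_good {k : ℕ} (hk : 2 ≤ k) {T : LabTree k 2 k} (hT : T.Good) :
    UGood ⟨T.inn 0, pf T, T.out⟩ := by
  obtain ⟨h1, hinj, hnw, hsurj, hreach, hdo⟩ := spec_of_good hk hT
  have ecc : ∀ v, Nat.card {x // x ≠ T.inn 0 ∧ pf T x = v} = Nat.card {e // T.src e = v} := by
    intro v
    refine (Nat.card_congr (Equiv.ofBijective (fun (e : {e // T.src e = v}) =>
      (⟨T.tgt e.1, hnw e.1, by rw [pf_eq_src hinj rfl, e.2]⟩ :
        {x // x ≠ T.inn 0 ∧ pf T x = v})) ⟨?_, ?_⟩)).symm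
    · intro e1 e2 h
      exact Subtype.ext (hinj (congrArg Subtype.val h))
    · rintro ⟨x, hxw, hxp⟩
      obtain ⟨e, he⟩ := hsurj x hxw
      refine ⟨⟨e, ?_⟩, Subtype.ext he⟩
      rw [← hxp, pf_eq_src hinj he]
  refine ⟨?_, ?_, ?_⟩
  · exact pf_eq_self (fun ⟨e, he⟩ => hnw e he)
  · exact fun v => iterate_of_reach hinj (hreach v)
  · intro v
    show Nat.card {x // x ≠ T.inn 0 ∧ pf T x = v} + Nat.card {i // T.out i = v} = _
    rw [ecc v]
    exact hdo v

noncomputable def toT {k : ℕ} (u : UStr k) (b : Fin (k - 1) ≃ {v : Fin k // v ≠ u.w}) :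
    LabTree k 2 k :=
  ⟨fun e => u.par (b e).1, fun e => (b e).1, u.out, fun _ => u.w⟩

lemma toT_tgt_inj {k : ℕ} (u : UStr k) (b : Fin (k - 1) ≃ {v : Fin k // v ≠ u.w}) :
    Function.Injective (toT u b).tgt :=
  fun e1 e2 h => b.injective (Subtype.ext h)

lemma pf_toT {k : ℕ} (u : UStr k) (hw : u.par u.w = u.w)
    (b : Fin (k - 1) ≃ {v : Fin k // v ≠ u.w}) (v : Fin k) : pf (toT u b) v = u.par v := by
  by_cases hv : v = u.w
  · subst hv
    rw [pf_eq_self, hw]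
    rintro ⟨e, he⟩
    exact (b e).2 he
  · have he : (toT u b).tgt (b.symm ⟨v, hv⟩) = v := by
      show (b (b.symm ⟨v, hv⟩)).1 = v
      rw [Equiv.apply_symm_apply]
    rw [pf_eq_src (toT_tgt_inj u b) he]
    show u.par (b (b.symm ⟨v, hv⟩)).1 = u.par v
    rw [Equiv.apply_symm_apply]

lemma good_toT {k : ℕ} (hk : 2 ≤ k) {u : UStr k} (hu : UGood u)
    (b : Fin (k - 1) ≃ {v : Fin k // v ≠ u.w}) : (toT u b).Good := by
  refine (good_iff_struct hk _).mpr
    ⟨u.w, rfl, rfl, toT_tgt_inj u b, fun e => (b e).2, ?_, ?_, ?_⟩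
  · intro v hv
    refine ⟨b.symm ⟨v, hv⟩, ?_⟩
    show (b (b.symm ⟨v, hv⟩)).1 = v
    rw [Equiv.apply_symm_apply]
  · intro v
    have hpf : pf (toT u b) = u.par := funext (pf_toT u hu.1 b)
    obtain ⟨j, hj⟩ := hu.2.1 v
    exact reach_of_iterate (by rw [hpf]; exact hj)
  · intro v
    have hcc : Nat.card {e // (toT u b).src e = v} = ccount u v := by
      refine Nat.card_congr (((Equiv.subtypeEquiv b (fun e => Iff.rfl)).trans
        (Equiv.subtypeSubtypeEquivSubtypeInter (fun x => x ≠ u.w) (fun x => u.par x = v))))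
    show Nat.card {e // (toT u b).src e = v} + Nat.card {i // u.out i = v} = _
    rw [hcc]
    exact hu.2.2 v

theorem card_good_eq_ustr {k : ℕ} (hk : 2 ≤ k) :
    Nat.card {T : LabTree k 2 k // T.Good}
      = Nat.card {u : UStr k // UGood u} * Nat.factorial (k - 1) := by
  classical
  have E : {T : LabTree k 2 k // T.Good}
      ≃ ({u : UStr k // UGood u} × Equiv.Perm (Fin (k - 1))) :=
    { toFun := fun T =>
        (⟨⟨T.1.inn 0, pf T.1, T.1.out⟩, ugood_of_good hk T.2⟩,
         (Equiv.ofBijective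
            (fun e => (⟨T.1.tgt e, (spec_of_good hk T.2).2.2.1 e⟩ : {v // v ≠ T.1.inn 0}))
            ⟨fun e1 e2 h => (spec_of_good hk T.2).2.1 (congrArg Subtype.val h),
             fun x => by
               obtain ⟨e, he⟩ := (spec_of_good hk T.2).2.2.2.1 x.1 x.2
               exact ⟨e, Subtype.ext he⟩⟩).trans (punch (T.1.inn 0)))
      invFun := fun p =>
        ⟨toT p.1.1 (p.2.trans (punch p.1.1.w).symm), good_toT hk p.1.2 _⟩
      left_inv := by
        rintro ⟨T, hT⟩
        obtain ⟨h1, hinj, hnw, hsurj, hreach, hdo⟩ := spec_of_good hk hT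
        refine Subtype.ext (lt_ext (fun e => ?_) (fun e => ?_) (fun i => rfl) (fun j => ?_))
        · show pf T ((punch (T.inn 0)).symm ((punch (T.inn 0)) ⟨T.tgt e, _⟩)).1 = T.src e
          rw [Equiv.symm_apply_apply]
          exact pf_eq_src hinj rfl
        · show ((punch (T.inn 0)).symm ((punch (T.inn 0)) ⟨T.tgt e, _⟩)).1 = T.tgt e
          rw [Equiv.symm_apply_apply]
        · show T.inn 0 = T.inn j
          rcases j with ⟨jv, hjv⟩
          interval_cases jv
          · rfl
          · exact h1.symm
      right_inv := by
        rintro ⟨⟨u, hu⟩, π⟩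
        refine Prod.ext ?_ ?_
        · refine Subtype.ext ?_
          show (⟨(toT u _).inn 0, pf (toT u _), (toT u _).out⟩ : UStr k) = u
          cases u with
          | mk w par out =>
              simp only [UStr.mk.injEq]
              refine ⟨rfl, funext (pf_toT _ hu.1 _), rfl⟩
        · refine Equiv.ext (fun e => ?_)
          show (punch u.w) ⟨((punch u.w).symm (π e)).1, _⟩ = π e
          have h : (⟨((punch u.w).symm (π e)).1, _⟩ : {v // v ≠ u.w})
              = (punch u.w).symm (π e) := Subtype.ext rfl
          rw [h, Equiv.apply_symm_apply] }
  rw [Nat.card_congr E, Nat.card_prod, Nat.card_eq_fintype_card (α := Equiv.Perm (Fin (k-1))),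
    Fintype.card_perm, Fintype.card_fin]

/-! #### Counting `UStr`: helpers -/

section UHelp

lemma natCard_pos {α : Type*} [Finite α] {p : α → Prop} {a : α} (ha : p a) :
    0 < Nat.card {x // p x} :=
  Nat.card_pos_iff.mpr ⟨⟨⟨a, ha⟩⟩, inferInstance⟩

lemma two_le_natCard {α : Type*} [Fintype α] [DecidableEq α] {p : α → Prop} {a b : α}
    (hab : a ≠ b) (ha : p a) (hb : p b) : 2 ≤ Nat.card {x // p x} := by
  classical
  rw [Nat.card_eq_fintype_card, Fintype.card_subtype]
  have hsub : ({a, b} : Finset α) ⊆ Finset.univ.filter p := by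
    intro x hx
    rcases Finset.mem_insert.mp hx with rfl | hx
    · exact Finset.mem_filter.mpr ⟨Finset.mem_univ _, ha⟩
    · rw [Finset.mem_singleton] at hx
      subst hx
      exact Finset.mem_filter.mpr ⟨Finset.mem_univ _, hb⟩
  calc 2 = ({a, b} : Finset α).card := by rw [Finset.card_insert_of_notMem (by simpa using hab), Finset.card_singleton]
  _ ≤ _ := Finset.card_le_card hsub

lemma three_le_natCard {α : Type*} [Fintype α] [DecidableEq α] {p : α → Prop} {a b c : α}
    (hab : a ≠ b) (hac : a ≠ c) (hbc : b ≠ c) (ha : p a) (hb : p b) (hc : p c) :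
    3 ≤ Nat.card {x // p x} := by
  classical
  rw [Nat.card_eq_fintype_card, Fintype.card_subtype]
  have hsub : ({a, b, c} : Finset α) ⊆ Finset.univ.filter p := by
    intro x hx
    simp only [Finset.mem_insert, Finset.mem_singleton] at hx
    rcases hx with rfl | rfl | rfl
    · exact Finset.mem_filter.mpr ⟨Finset.mem_univ _, ha⟩
    · exact Finset.mem_filter.mpr ⟨Finset.mem_univ _, hb⟩
    · exact Finset.mem_filter.mpr ⟨Finset.mem_univ _, hc⟩
  have hcard : ({a, b, c} : Finset α).card = 3 := by
    rw [Finset.card_insert_of_notMem (by simp [hab, hac]),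
      Finset.card_insert_of_notMem (by simpa using hbc), Finset.card_singleton]
  calc 3 = ({a, b, c} : Finset α).card := hcard.symm
  _ ≤ _ := Finset.card_le_card hsub

lemma natCard_eq_sum {α : Type*} [Fintype α] (p : α → Prop) [DecidablePred p] :
    Nat.card {a // p a} = ∑ a : α, if p a then 1 else 0 := by
  rw [Nat.card_eq_fintype_card, Fintype.card_subtype, Finset.card_filter]

/-- In a good `UStr`, the root has exactly one child and no legs. -/
lemma ugood_root {k : ℕ} (hk : 2 ≤ k) {u : UStr k} (hu : UGood u) :
    ccount u u.w = 1 ∧ lcount u u.w = 0 := by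
  classical
  obtain ⟨hw, hreach, hcount⟩ := hu
  have hx0 : ∃ x : Fin k, x ≠ u.w := by
    by_cases h : (⟨0, by omega⟩ : Fin k) = u.w
    · exact ⟨⟨1, by omega⟩, fun hh => by rw [← h] at hh; exact absurd (congrArg Fin.val hh) (by simp)⟩
    · exact ⟨⟨0, by omega⟩, h⟩
  obtain ⟨x0, hx0⟩ := hx0
  have hexj : ∃ j, u.par^[j] x0 = u.w := hreach x0
  set j0 := Nat.find hexj with hj0
  have hspec : u.par^[j0] x0 = u.w := Nat.find_spec hexj
  have hj0pos : j0 ≠ 0 := by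
    intro h
    rw [h] at hspec
    exact hx0 hspec
  obtain ⟨j1, hj1⟩ := Nat.exists_eq_succ_of_ne_zero hj0pos
  have hy : u.par (u.par^[j1] x0) = u.w := by
    have hy0 : u.par^[j1 + 1] x0 = u.w := by rw [← Nat.succ_eq_add_one, ← hj1]; exact hspec
    rw [Function.iterate_succ_apply'] at hy0
    exact hy0
  have hyne : u.par^[j1] x0 ≠ u.w := Nat.find_min hexj (by omega)
  have hcc : 0 < ccount u u.w := natCard_pos (p := fun x => x ≠ u.w ∧ u.par x = u.w) ⟨hyne, hy⟩
  have := hcount u.w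
  rw [if_pos rfl] at this
  omega

lemma ugood_out_ne {k : ℕ} (hk : 2 ≤ k) {u : UStr k} (hu : UGood u) (i : Fin k) :
    u.out i ≠ u.w := by
  intro h
  have := (ugood_root hk hu).2
  have hpos : 0 < lcount u u.w := natCard_pos (p := fun i => u.out i = u.w) h
  omega

lemma upar_ne_self {k : ℕ} {u : UStr k} (hu : UGood u) {x : Fin k} (hx : x ≠ u.w) :
    u.par x ≠ x := by
  intro h
  obtain ⟨j, hj⟩ := hu.2.1 x
  rw [Function.iterate_fixed h] at hj
  exact hx hj

lemma ustr_ext {k : ℕ} {a b : UStr k} (h1 : a.w = b.w) (h2 : a.par = b.par)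
    (h3 : a.out = b.out) : a = b := by
  cases a; cases b
  simp only [UStr.mk.injEq]
  exact ⟨h1, h2, h3⟩

/-- Chosen inverse of `succAbove`. -/
noncomputable def sInv {k : ℕ} (v : Fin (k + 1)) (z : Fin (k + 1)) (h : z ≠ v) : Fin k :=
  (Fin.exists_succAbove_eq h).choose

lemma sInv_spec {k : ℕ} (v : Fin (k + 1)) (z : Fin (k + 1)) (h : z ≠ v) :
    v.succAbove (sInv v z h) = z :=
  (Fin.exists_succAbove_eq h).choose_spec

lemma sInv_succAbove {k : ℕ} (v : Fin (k + 1)) (y : Fin k) (h : v.succAbove y ≠ v) :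
    sInv v (v.succAbove y) h = y :=
  Fin.succAbove_right_injective (sInv_spec v _ h)

end UHelp

section Step

variable {k : ℕ}

/-- The distinguished old vertex for an `inl` position. -/
noncomputable def ix0 (u : UStr k) (c : Fin (k - 1)) : Fin k :=
  ((punch u.w).symm c).1

lemma ix0_ne_w (u : UStr k) (c : Fin (k - 1)) : ix0 u c ≠ u.w :=
  ((punch u.w).symm c).2

/-- The anchor vertex: parent of the new vertex after insertion. -/
noncomputable def ianch (u : UStr k) (p : Fin (k - 1) ⊕ Fin k) : Fin k :=
  match p with
  | .inl c => u.par (ix0 u c)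
  | .inr i => u.out i

/-- Raw insertion of a new vertex `v` into a rooted structure at position `p`. -/
noncomputable def iraw (u : UStr k) (v : Fin (k + 1)) (p : Fin (k - 1) ⊕ Fin k) :
    UStr (k + 1) where
  w := v.succAbove u.w
  par := fun z =>
    if hz : z = v then v.succAbove (ianch u p)
    else
      match p with
      | .inl c => if sInv v z hz = ix0 u c then v
                  else v.succAbove (u.par (sInv v z hz))
      | .inr _ => v.succAbove (u.par (sInv v z hz))
  out := fun i' =>
    if hi : i' = Fin.last k then v
    else
      match p with
      | .inl _ => v.succAbove (u.out (i'.castPred hi))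
      | .inr i0 => if i'.castPred hi = i0 then v
                   else v.succAbove (u.out (i'.castPred hi))

variable {u : UStr k} {v : Fin (k + 1)} {p : Fin (k - 1) ⊕ Fin k}

lemma iraw_w : (iraw u v p).w = v.succAbove u.w := rfl

lemma iraw_par_v : (iraw u v p).par v = v.succAbove (ianch u p) := dif_pos rfl

lemma iraw_par_em_inl_x0 (c : Fin (k - 1)) :
    (iraw u v (.inl c)).par (v.succAbove (ix0 u c)) = v := by
  show dite _ _ _ = _
  rw [dif_neg (Fin.succAbove_ne v _)]
  simp [sInv_succAbove]

lemma iraw_par_em_inl_ne (c : Fin (k - 1)) {y : Fin k} (hy : y ≠ ix0 u c) :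
    (iraw u v (.inl c)).par (v.succAbove y) = v.succAbove (u.par y) := by
  show dite _ _ _ = _
  rw [dif_neg (Fin.succAbove_ne v _)]
  simp only [sInv_succAbove, if_neg hy]

lemma iraw_par_em_inr (i0 : Fin k) (y : Fin k) :
    (iraw u v (.inr i0)).par (v.succAbove y) = v.succAbove (u.par y) := by
  show dite _ _ _ = _
  rw [dif_neg (Fin.succAbove_ne v _)]
  simp only [sInv_succAbove]

lemma iraw_out_last : (iraw u v p).out (Fin.last k) = v := dif_pos rfl

lemma iraw_out_castSucc_inl (c : Fin (k - 1)) (i : Fin k) :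
    (iraw u v (.inl c)).out (Fin.castSucc i) = v.succAbove (u.out i) := by
  show dite _ _ _ = _
  rw [dif_neg (Fin.castSucc_lt_last i).ne]
  simp only [Fin.castPred_castSucc]

lemma iraw_out_castSucc_inr {i0 i : Fin k} :
    (iraw u v (.inr i0)).out (Fin.castSucc i)
      = if i = i0 then v else v.succAbove (u.out i) := by
  show dite _ _ _ = _
  rw [dif_neg (Fin.castSucc_lt_last i).ne]
  simp only [Fin.castPred_castSucc]
  congr

lemma iraw_count_em (z : Fin k) :
    ccount (iraw u v p) (v.succAbove z) + lcount (iraw u v p) (v.succAbove z)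
      = ccount u z + lcount u z := by
  classical
  have hcc' : ccount (iraw u v p) (v.succAbove z)
      = (if (v ≠ (iraw u v p).w ∧ (iraw u v p).par v = v.succAbove z) then 1 else 0)
        + ∑ y : Fin k, (if (v.succAbove y ≠ (iraw u v p).w
            ∧ (iraw u v p).par (v.succAbove y) = v.succAbove z) then 1 else 0) := by
    unfold ccount
    rw [natCard_eq_sum, Fin.sum_univ_succAbove _ v]
  have hlc' : lcount (iraw u v p) (v.succAbove z)
      = ∑ i : Fin k, (if (iraw u v p).out (Fin.castSucc i) = v.succAbove z then 1 else 0)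
        + (if (iraw u v p).out (Fin.last k) = v.succAbove z then 1 else 0) := by
    unfold lcount
    rw [natCard_eq_sum, Fin.sum_univ_castSucc]
  have hcc : ccount u z = ∑ y : Fin k, (if (y ≠ u.w ∧ u.par y = z) then 1 else 0) :=
    natCard_eq_sum _
  have hlc : lcount u z = ∑ i : Fin k, (if u.out i = z then 1 else 0) := natCard_eq_sum _
  have hlast : (if (iraw u v p).out (Fin.last k) = v.succAbove z then 1 else 0) = 0 := by
    rw [iraw_out_last, if_neg (fun h => Fin.succAbove_ne v z h.symm)]
  cases p with
  | inl c =>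
      have hA : (if (v ≠ (iraw u v (.inl c)).w ∧ (iraw u v (.inl c)).par v = v.succAbove z)
            then 1 else 0)
          = if (ix0 u c ≠ u.w ∧ u.par (ix0 u c) = z) then 1 else 0 := by
        rw [iraw_par_v]
        refine if_congr ⟨fun h => ⟨ix0_ne_w u c, ?_⟩, fun h => ⟨?_, ?_⟩⟩ rfl rfl
        · exact Fin.succAbove_right_injective h.2
        · exact fun hh => Fin.succAbove_ne v u.w hh.symm
        · exact congrArg _ h.2
      have hS1 : ∑ y : Fin k, (if (v.succAbove y ≠ (iraw u v (.inl c)).w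
            ∧ (iraw u v (.inl c)).par (v.succAbove y) = v.succAbove z) then 1 else 0)
          = ∑ y ∈ Finset.univ.erase (ix0 u c), (if (y ≠ u.w ∧ u.par y = z) then 1 else 0) := by
        rw [← Finset.add_sum_erase _ _ (Finset.mem_univ (ix0 u c))]
        have h0 : (if (v.succAbove (ix0 u c) ≠ (iraw u v (.inl c)).w
            ∧ (iraw u v (.inl c)).par (v.succAbove (ix0 u c)) = v.succAbove z)
              then 1 else 0) = 0 := by
          rw [iraw_par_em_inl_x0, if_neg]
          rintro ⟨-, h⟩
          exact Fin.succAbove_ne v z h.symm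
        rw [h0, zero_add]
        refine Finset.sum_congr rfl (fun y hy => ?_)
        have hyx : y ≠ ix0 u c := (Finset.mem_erase.mp hy).1
        rw [iraw_par_em_inl_ne c hyx]
        refine if_congr ⟨fun h => ⟨?_, ?_⟩, fun h => ⟨?_, ?_⟩⟩ rfl rfl
        · intro hh; exact h.1 (by rw [iraw_w, hh])
        · exact Fin.succAbove_right_injective h.2
        · intro hh
          rw [iraw_w] at hh
          exact h.1 (Fin.succAbove_right_injective hh)
        · exact congrArg _ h.2
      have hS2 : ∑ y : Fin k, (if (y ≠ u.w ∧ u.par y = z) then 1 else 0)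
          = (if (ix0 u c ≠ u.w ∧ u.par (ix0 u c) = z) then 1 else 0)
            + ∑ y ∈ Finset.univ.erase (ix0 u c), (if (y ≠ u.w ∧ u.par y = z) then 1 else 0) :=
        (Finset.add_sum_erase _ _ (Finset.mem_univ _)).symm
      have hL : ∑ i : Fin k,
            (if (iraw u v (.inl c)).out (Fin.castSucc i) = v.succAbove z then 1 else 0)
          = ∑ i : Fin k, (if u.out i = z then 1 else 0) := by
        refine Finset.sum_congr rfl (fun i _ => ?_)
        rw [iraw_out_castSucc_inl]
        exact if_congr Fin.succAbove_right_inj rfl rfl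
      rw [hcc', hlc', hcc, hlc, hA, hS1, hS2, hL, hlast]
      omega
  | inr i0 =>
      have hA : (if (v ≠ (iraw u v (.inr i0)).w ∧ (iraw u v (.inr i0)).par v = v.succAbove z)
            then 1 else 0)
          = if u.out i0 = z then 1 else 0 := by
        rw [iraw_par_v]
        refine if_congr ⟨fun h => Fin.succAbove_right_injective h.2,
          fun h => ⟨fun hh => Fin.succAbove_ne v u.w hh.symm, congrArg _ h⟩⟩ rfl rfl
      have hS1 : ∑ y : Fin k, (if (v.succAbove y ≠ (iraw u v (.inr i0)).w
            ∧ (iraw u v (.inr i0)).par (v.succAbove y) = v.succAbove z) then 1 else 0)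
          = ∑ y : Fin k, (if (y ≠ u.w ∧ u.par y = z) then 1 else 0) := by
        refine Finset.sum_congr rfl (fun y _ => ?_)
        rw [iraw_par_em_inr]
        refine if_congr ⟨fun h => ⟨?_, ?_⟩, fun h => ⟨?_, ?_⟩⟩ rfl rfl
        · intro hh; exact h.1 (by rw [iraw_w, hh])
        · exact Fin.succAbove_right_injective h.2
        · intro hh
          rw [iraw_w] at hh
          exact h.1 (Fin.succAbove_right_injective hh)
        · exact congrArg _ h.2
      have hL1 : ∑ i : Fin k,
            (if (iraw u v (.inr i0)).out (Fin.castSucc i) = v.succAbove z then 1 else 0)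
          = ∑ i ∈ Finset.univ.erase i0, (if u.out i = z then 1 else 0) := by
        rw [← Finset.add_sum_erase _ _ (Finset.mem_univ i0)]
        have h0 : (if (iraw u v (.inr i0)).out (Fin.castSucc i0) = v.succAbove z
            then 1 else 0) = 0 := by
          rw [iraw_out_castSucc_inr, if_pos rfl, if_neg (fun h => Fin.succAbove_ne v z h.symm)]
        rw [h0, zero_add]
        refine Finset.sum_congr rfl (fun i hi => ?_)
        rw [iraw_out_castSucc_inr, if_neg (Finset.mem_erase.mp hi).1]
        exact if_congr Fin.succAbove_right_inj rfl rfl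
      have hL2 : ∑ i : Fin k, (if u.out i = z then 1 else 0)
          = (if u.out i0 = z then 1 else 0)
            + ∑ i ∈ Finset.univ.erase i0, (if u.out i = z then 1 else 0) :=
        (Finset.add_sum_erase _ _ (Finset.mem_univ _)).symm
      rw [hcc', hlc', hcc, hlc, hA, hS1, hL1, hL2, hlast]
      omega

lemma iraw_count_v :
    ccount (iraw u v p) v + lcount (iraw u v p) v = 2 := by
  classical
  have hcc' : ccount (iraw u v p) v
      = (if (v ≠ (iraw u v p).w ∧ (iraw u v p).par v = v) then 1 else 0)
        + ∑ y : Fin k, (if (v.succAbove y ≠ (iraw u v p).w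
            ∧ (iraw u v p).par (v.succAbove y) = v) then 1 else 0) := by
    unfold ccount
    rw [natCard_eq_sum, Fin.sum_univ_succAbove _ v]
  have hlc' : lcount (iraw u v p) v
      = ∑ i : Fin k, (if (iraw u v p).out (Fin.castSucc i) = v then 1 else 0)
        + (if (iraw u v p).out (Fin.last k) = v then 1 else 0) := by
    unfold lcount
    rw [natCard_eq_sum, Fin.sum_univ_castSucc]
  have hA : (if (v ≠ (iraw u v p).w ∧ (iraw u v p).par v = v) then 1 else 0) = 0 := by
    rw [iraw_par_v, if_neg]
    rintro ⟨-, h⟩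
    exact Fin.succAbove_ne v _ h
  have hlast : (if (iraw u v p).out (Fin.last k) = v then 1 else 0) = 1 := by
    rw [iraw_out_last, if_pos rfl]
  cases p with
  | inl c =>
      have hS : ∑ y : Fin k, (if (v.succAbove y ≠ (iraw u v (.inl c)).w
            ∧ (iraw u v (.inl c)).par (v.succAbove y) = v) then 1 else 0) = 1 := by
        have hpt : ∀ y : Fin k, (if (v.succAbove y ≠ (iraw u v (.inl c)).w
            ∧ (iraw u v (.inl c)).par (v.succAbove y) = v) then 1 else 0)
            = if y = ix0 u c then 1 else 0 := by
          intro y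
          by_cases hy : y = ix0 u c
          · subst hy
            have hne : v.succAbove (ix0 u c) ≠ (iraw u v (.inl c)).w := by
              rw [iraw_w]
              intro hh
              exact ix0_ne_w u c (Fin.succAbove_right_injective hh)
            rw [if_pos ⟨hne, iraw_par_em_inl_x0 c⟩, if_pos rfl]
          · rw [if_neg, if_neg hy]
            rintro ⟨-, h⟩
            rw [iraw_par_em_inl_ne c hy] at h
            exact Fin.succAbove_ne v _ h
        rw [Finset.sum_congr rfl (fun y _ => hpt y), Finset.sum_ite_eq' Finset.univ (ix0 u c)]
        simp
      have hL : ∑ i : Fin k, (if (iraw u v (.inl c)).out (Fin.castSucc i) = v then 1 else 0)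
          = 0 := by
        refine Finset.sum_eq_zero (fun i _ => ?_)
        rw [iraw_out_castSucc_inl, if_neg (Fin.succAbove_ne v _)]
      rw [hcc', hlc', hA, hS, hL, hlast]
  | inr i0 =>
      have hS : ∑ y : Fin k, (if (v.succAbove y ≠ (iraw u v (.inr i0)).w
            ∧ (iraw u v (.inr i0)).par (v.succAbove y) = v) then 1 else 0) = 0 := by
        refine Finset.sum_eq_zero (fun y _ => ?_)
        rw [if_neg]
        rintro ⟨-, h⟩
        rw [iraw_par_em_inr] at h
        exact Fin.succAbove_ne v _ h
      have hL : ∑ i : Fin k, (if (iraw u v (.inr i0)).out (Fin.castSucc i) = v then 1 else 0)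
          = 1 := by
        have hpt : ∀ i : Fin k, (if (iraw u v (.inr i0)).out (Fin.castSucc i) = v then 1 else 0)
            = if i = i0 then 1 else 0 := by
          intro i
          by_cases hi : i = i0
          · subst hi
            rw [iraw_out_castSucc_inr]
            simp
          · rw [iraw_out_castSucc_inr, if_neg hi, if_neg (Fin.succAbove_ne v _), if_neg hi]
        rw [Finset.sum_congr rfl (fun i _ => hpt i), Finset.sum_ite_eq' Finset.univ i0]
        simp
      rw [hcc', hlc', hA, hS, hL, hlast]

lemma iraw_two_step (y : Fin k) :
    ∃ t, (t = 1 ∨ (t = 2 ∧ (iraw u v p).par (v.succAbove y) = v)) ∧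
      (iraw u v p).par^[t] (v.succAbove y) = v.succAbove (u.par y) := by
  cases p with
  | inl c =>
      by_cases hy : y = ix0 u c
      · subst hy
        refine ⟨2, Or.inr ⟨rfl, iraw_par_em_inl_x0 c⟩, ?_⟩
        rw [show (2 : ℕ) = 1 + 1 from rfl, Function.iterate_add_apply,
          Function.iterate_one, iraw_par_em_inl_x0, iraw_par_v]
        rfl
      · refine ⟨1, Or.inl rfl, ?_⟩
        rw [Function.iterate_one, iraw_par_em_inl_ne c hy]
  | inr i0 =>
      refine ⟨1, Or.inl rfl, ?_⟩
      rw [Function.iterate_one, iraw_par_em_inr]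

lemma iraw_reach (hu : ∀ y, ∃ j, u.par^[j] y = u.w) :
    ∀ z, ∃ j, (iraw u v p).par^[j] z = (iraw u v p).w := by
  have key : ∀ j y, u.par^[j] y = u.w →
      ∃ j', (iraw u v p).par^[j'] (v.succAbove y) = v.succAbove u.w := by
    intro j
    induction j with
    | zero =>
        intro y hy
        rw [Function.iterate_zero_apply] at hy
        exact ⟨0, by rw [Function.iterate_zero_apply, hy]⟩
    | succ j ih =>
        intro y hy
        rw [Function.iterate_succ_apply] at hy
        obtain ⟨j', hj'⟩ := ih (u.par y) hy
        obtain ⟨t, _, ht⟩ := iraw_two_step (u := u) (v := v) (p := p) y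
        exact ⟨j' + t, by rw [Function.iterate_add_apply, ht, hj']⟩
  intro z
  by_cases hz : z = v
  · subst hz
    obtain ⟨j', hj'⟩ := key _ _ (hu (ianch u p)).choose_spec
    refine ⟨j' + 1, ?_⟩
    rw [Function.iterate_add_apply, Function.iterate_one, iraw_par_v, hj', iraw_w]
  · obtain ⟨y, hy⟩ := Fin.exists_succAbove_eq hz
    obtain ⟨j, hj⟩ := hu y
    obtain ⟨j', hj'⟩ := key j y hj
    exact ⟨j', by rw [iraw_w, ← hy]; exact hj'⟩

lemma iraw_reach_rev (hg : ∀ z, ∃ j', (iraw u v p).par^[j'] z = (iraw u v p).w) :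
    ∀ y, ∃ j, u.par^[j] y = u.w := by
  have key : ∀ j' y, (iraw u v p).par^[j'] (v.succAbove y) = v.succAbove u.w →
      ∃ j, u.par^[j] y = u.w := by
    intro j'
    induction j' using Nat.strong_induction_on with
    | _ j' ih =>
        intro y hy
        by_cases hyw : y = u.w
        · exact ⟨0, hyw⟩
        · obtain ⟨t, htv, ht⟩ := iraw_two_step (u := u) (v := v) (p := p) y
          have hj't : t ≤ j' := by
            by_contra hlt
            push_neg at hlt
            rcases htv with rfl | ⟨rfl, hpar⟩
            · have hj0 : j' = 0 := by omega
              rw [hj0, Function.iterate_zero_apply] at hy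
              exact hyw (Fin.succAbove_right_injective hy)
            · interval_cases j'
              · rw [Function.iterate_zero_apply] at hy
                exact hyw (Fin.succAbove_right_injective hy)
              · rw [Function.iterate_one, hpar] at hy
                exact Fin.succAbove_ne v u.w hy.symm
          obtain ⟨j'', hj''⟩ : ∃ j'', j' = j'' + t := ⟨j' - t, by omega⟩
          rw [hj'', Function.iterate_add_apply, ht] at hy
          have hj''lt : j'' < j' := by
            rcases htv with rfl | ⟨rfl, -⟩ <;> omega
          obtain ⟨j, hj⟩ := ih j'' hj''lt (u.par y) hy
          exact ⟨j + 1, by rw [Function.iterate_succ_apply, hj]⟩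
  intro y
  obtain ⟨j', hj'⟩ := hg (v.succAbove y)
  rw [iraw_w] at hj'
  exact key j' y hj'

lemma ugood_iraw (hu : UGood u) : UGood (iraw u v p) := by
  refine ⟨?_, iraw_reach hu.2.1, ?_⟩
  · show (iraw u v p).par (v.succAbove u.w) = v.succAbove u.w
    cases p with
    | inl c =>
        rw [iraw_par_em_inl_ne c (fun h => ix0_ne_w u c h.symm), hu.1]
    | inr i0 => rw [iraw_par_em_inr, hu.1]
  · intro z'
    by_cases hz : z' = v
    · rw [hz]
      have hne : ¬ (v = (iraw u v p).w) := by
        rw [iraw_w]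
        exact fun h => Fin.succAbove_ne v u.w h.symm
      rw [iraw_count_v, if_neg hne]
    · obtain ⟨y, hy⟩ := Fin.exists_succAbove_eq hz
      rw [← hy, iraw_count_em, hu.2.2 y, iraw_w]
      exact if_congr Fin.succAbove_right_inj.symm rfl rfl

lemma ugood_of_iraw (hg : UGood (iraw u v p)) : UGood u := by
  refine ⟨?_, iraw_reach_rev hg.2.1, ?_⟩
  · have h := hg.1
    rw [iraw_w] at h
    cases p with
    | inl c =>
        rw [iraw_par_em_inl_ne c (fun hh => ix0_ne_w u c hh.symm)] at h
        exact Fin.succAbove_right_injective h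
    | inr i0 =>
        rw [iraw_par_em_inr] at h
        exact Fin.succAbove_right_injective h
  · intro z
    have h := hg.2.2 (v.succAbove z)
    rw [iraw_count_em, iraw_w] at h
    rw [h]
    exact if_congr Fin.succAbove_right_inj rfl rfl

lemma iraw_injective {u1 u2 : UStr k} {v1 v2 : Fin (k + 1)} {p1 p2 : Fin (k - 1) ⊕ Fin k}
    (h : iraw u1 v1 p1 = iraw u2 v2 p2) : u1 = u2 ∧ v1 = v2 ∧ p1 = p2 := by
  have hv : v1 = v2 := by
    have h1 : (iraw u1 v1 p1).out (Fin.last k) = v1 := iraw_out_last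
    have h2 : (iraw u2 v2 p2).out (Fin.last k) = v2 := iraw_out_last
    rw [h] at h1
    exact h1.symm.trans h2
  subst hv
  have hw : u1.w = u2.w := by
    have hh := congrArg UStr.w h
    rw [iraw_w, iraw_w] at hh
    exact Fin.succAbove_right_injective hh
  have hanch : ∀ (q1 q2 : Fin (k - 1) ⊕ Fin k), iraw u1 v1 q1 = iraw u2 v1 q2 →
      ianch u1 q1 = ianch u2 q2 := by
    intro q1 q2 hq
    have hv' : (iraw u1 v1 q1).par v1 = (iraw u2 v1 q2).par v1 := by rw [hq]
    rw [iraw_par_v, iraw_par_v] at hv'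
    exact Fin.succAbove_right_injective hv'
  cases p1 with
  | inl c1 =>
      cases p2 with
      | inl c2 =>
          have hx0 : ix0 u1 c1 = ix0 u2 c2 := by
            have h1 : (iraw u1 v1 (.inl c1)).par (v1.succAbove (ix0 u1 c1)) = v1 :=
              iraw_par_em_inl_x0 c1
            rw [h] at h1
            by_contra hne
            rw [iraw_par_em_inl_ne c2 hne] at h1
            exact Fin.succAbove_ne v1 _ h1
          have hpar : u1.par = u2.par := by
            funext y
            by_cases hy : y = ix0 u1 c1
            · have ha := hanch _ _ h
              subst hy
              calc u1.par (ix0 u1 c1) = ianch u1 (.inl c1) := rfl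
              _ = ianch u2 (.inl c2) := ha
              _ = u2.par (ix0 u2 c2) := rfl
              _ = u2.par (ix0 u1 c1) := by rw [hx0]
            · have h1 : (iraw u1 v1 (.inl c1)).par (v1.succAbove y)
                  = v1.succAbove (u1.par y) := iraw_par_em_inl_ne c1 hy
              rw [h, iraw_par_em_inl_ne c2 (hx0 ▸ hy)] at h1
              exact (Fin.succAbove_right_injective h1).symm
          have hout : u1.out = u2.out := by
            funext i
            have h1 : (iraw u1 v1 (.inl c1)).out (Fin.castSucc i)
                = v1.succAbove (u1.out i) := iraw_out_castSucc_inl c1 i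
            rw [h, iraw_out_castSucc_inl] at h1
            exact (Fin.succAbove_right_injective h1).symm
          have hu : u1 = u2 := by
            cases u1; cases u2
            simp only [UStr.mk.injEq]
            exact ⟨hw, hpar, hout⟩
          subst hu
          have hc : c1 = c2 := by
            have := Subtype.ext (p := fun x => x ≠ u1.w) hx0
            exact (punch u1.w).symm.injective this
          exact ⟨rfl, rfl, by rw [hc]⟩
      | inr i2 =>
          exfalso
          have h1 : (iraw u1 v1 (.inl c1)).par (v1.succAbove (ix0 u1 c1)) = v1 :=
            iraw_par_em_inl_x0 c1
          rw [h, iraw_par_em_inr] at h1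
          exact Fin.succAbove_ne v1 _ h1
  | inr i1 =>
      cases p2 with
      | inl c2 =>
          exfalso
          have h1 : (iraw u2 v1 (.inl c2)).par (v1.succAbove (ix0 u2 c2)) = v1 :=
            iraw_par_em_inl_x0 c2
          rw [← h, iraw_par_em_inr] at h1
          exact Fin.succAbove_ne v1 _ h1
      | inr i2 =>
          have hi : i1 = i2 := by
            have h1 : (iraw u1 v1 (.inr i1)).out (Fin.castSucc i1) = v1 := by
              rw [iraw_out_castSucc_inr, if_pos rfl]
            rw [h, iraw_out_castSucc_inr] at h1
            by_contra hne
            rw [if_neg hne] at h1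
            exact Fin.succAbove_ne v1 _ h1
          subst hi
          have hpar : u1.par = u2.par := by
            funext y
            have h1 : (iraw u1 v1 (.inr i1)).par (v1.succAbove y)
                = v1.succAbove (u1.par y) := iraw_par_em_inr i1 y
            rw [h, iraw_par_em_inr] at h1
            exact (Fin.succAbove_right_injective h1).symm
          have hout : u1.out = u2.out := by
            funext i
            by_cases hi : i = i1
            · subst hi
              exact hanch _ _ h
            · have h1 : (iraw u1 v1 (.inr i1)).out (Fin.castSucc i)
                  = v1.succAbove (u1.out i) := by
                rw [iraw_out_castSucc_inr, if_neg hi]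
              rw [h, iraw_out_castSucc_inr, if_neg hi] at h1
              exact (Fin.succAbove_right_injective h1).symm
          have hu : u1 = u2 := by
            cases u1; cases u2
            simp only [UStr.mk.injEq]
            exact ⟨hw, hpar, hout⟩
          exact ⟨hu, rfl, rfl⟩

lemma iraw_surjective (hk1 : 1 ≤ k) {u' : UStr (k + 1)} (hu' : UGood u') :
    ∃ (u : UStr k) (v : Fin (k + 1)) (p : Fin (k - 1) ⊕ Fin k), iraw u v p = u' := by
  classical
  set v := u'.out (Fin.last k) with hvdef
  have hv : v ≠ u'.w := ugood_out_ne (k := k + 1) (by omega) hu' (Fin.last k)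
  have hP : u'.par v ≠ v := upar_ne_self hu' hv
  set dp : Fin (k + 1) → Fin k :=
    fun z => if hz : z = v then sInv v (u'.par v) hP else sInv v z hz with hdpdef
  have hdp1 : ∀ z (hz : z ≠ v), v.succAbove (dp z) = z := by
    intro z hz
    have h1 : dp z = sInv v z hz := dif_neg hz
    rw [h1, sInv_spec]
  have hdp2 : v.succAbove (dp v) = u'.par v := by
    have h1 : dp v = sInv v (u'.par v) hP := dif_pos rfl
    rw [h1, sInv_spec]
  set u : UStr k := ⟨dp u'.w, fun y => dp (u'.par (v.succAbove y)),
    fun i => dp (u'.out (Fin.castSucc i))⟩ with hudef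
  have huw : v.succAbove u.w = u'.w := hdp1 _ (Ne.symm hv)
  have hupar : ∀ y : Fin k, u.par y = dp (u'.par (v.succAbove y)) := fun y => rfl
  have huout : ∀ i : Fin k, u.out i = dp (u'.out (Fin.castSucc i)) := fun i => rfl
  have hcount := hu'.2.2 v
  rw [if_neg hv] at hcount
  have hlastv : u'.out (Fin.last k) = v := rfl
  have hchild_not_w : ∀ x, u'.par x = v → x ≠ u'.w := by
    intro x hx hxw
    rw [hxw, hu'.1] at hx
    exact hv hx.symm
  by_cases hleg : ∃ i : Fin k, u'.out (Fin.castSucc i) = v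
  · -- leg case: position `inr`
    obtain ⟨i0, hi0⟩ := hleg
    have huniq : ∀ i : Fin k, u'.out (Fin.castSucc i) = v → i = i0 := by
      intro i hi
      by_contra hne
      have h3 : 3 ≤ lcount u' v := by
        unfold lcount
        exact three_le_natCard (p := fun i' => u'.out i' = v)
          (fun h => hne (Fin.castSucc_inj.mp h))
          (Fin.castSucc_lt_last i).ne (Fin.castSucc_lt_last i0).ne hi hi0 hlastv
      omega
    have hlc2 : 2 ≤ lcount u' v := by
      unfold lcount
      exact two_le_natCard (p := fun i' => u'.out i' = v)
        (Fin.castSucc_lt_last i0).ne hi0 hlastv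
    have hnochild : ∀ x, u'.par x = v → False := by
      intro x hx
      have hpos : 0 < ccount u' v :=
        natCard_pos (p := fun x => x ≠ u'.w ∧ u'.par x = v) ⟨hchild_not_w x hx, hx⟩
      omega
    refine ⟨u, v, .inr i0, ?_⟩
    refine ustr_ext (by rw [iraw_w, huw]) (funext fun z => ?_) (funext fun i' => ?_)
    · by_cases hz : z = v
      · rw [hz, iraw_par_v]
        show v.succAbove (u.out i0) = u'.par v
        rw [huout, hi0, hdp2]
      · obtain ⟨y, hy⟩ := Fin.exists_succAbove_eq hz
        have hpz : u'.par z ≠ v := fun hh => hnochild z hh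
        rw [← hy, iraw_par_em_inr, hupar, hy]
        exact hdp1 _ hpz
    · by_cases hi : i' = Fin.last k
      · rw [hi, iraw_out_last]
        try exact hlastv.symm
      · have hcs : Fin.castSucc (i'.castPred hi) = i' := Fin.castSucc_castPred i' hi
        rw [← hcs, iraw_out_castSucc_inr]
        by_cases h2 : i'.castPred hi = i0
        · rw [if_pos h2, h2, hi0]
        · rw [if_neg h2, huout]
          exact hdp1 _ (fun hh => h2 (huniq _ hh))
  · -- child case: position `inl`
    have hlc1 : lcount u' v = 1 := by
      unfold lcount
      refine natCard_one ⟨Fin.last k, hlastv, ?_⟩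
      intro i' hi'
      by_cases hi : i' = Fin.last k
      · exact hi
      · exact absurd ⟨i'.castPred hi, by rw [Fin.castSucc_castPred]; exact hi'⟩ hleg
    have hcc1 : Nat.card {x // x ≠ u'.w ∧ u'.par x = v} = 1 := by
      have : ccount u' v = 1 := by omega
      exact this
    obtain ⟨xc, hxc⟩ := Nat.card_eq_one_iff_exists.mp hcc1
    obtain ⟨c, hcw, hcpar⟩ := xc
    have hcuniq : ∀ x, u'.par x = v → x = c := by
      intro x hx
      exact congrArg Subtype.val (hxc ⟨x, hchild_not_w x hx, hx⟩)
    have hcv : c ≠ v := by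
      intro h
      rw [h] at hcpar
      exact hP hcpar
    have hdpc : dp c ≠ u.w := by
      intro h
      have h2 := congrArg v.succAbove h
      rw [hdp1 c hcv, huw] at h2
      exact hcw h2
    refine ⟨u, v, .inl ((punch u.w) ⟨dp c, hdpc⟩), ?_⟩
    have hix0 : ix0 u ((punch u.w) ⟨dp c, hdpc⟩) = dp c := by
      unfold ix0
      rw [Equiv.symm_apply_apply]
    refine ustr_ext (by rw [iraw_w, huw]) (funext fun z => ?_) (funext fun i' => ?_)
    · by_cases hz : z = v
      · rw [hz, iraw_par_v]
        show v.succAbove (ianch u _) = u'.par v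
        have hia : ianch u (.inl ((punch u.w) ⟨dp c, hdpc⟩)) = u.par (dp c) := by
          show u.par (ix0 u _) = _
          rw [hix0]
        rw [hia, hupar, hdp1 c hcv, hcpar, hdp2]
      · obtain ⟨y, hy⟩ := Fin.exists_succAbove_eq hz
        by_cases hyc : y = ix0 u ((punch u.w) ⟨dp c, hdpc⟩)
        · rw [← hy, hyc, iraw_par_em_inl_x0, hix0, hdp1 c hcv, hcpar]
        · have hpz : u'.par z ≠ v := by
            intro hh
            refine hyc ?_
            rw [hix0]
            have hzc : z = c := hcuniq z hh
            rw [← hy] at hzc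
            exact Fin.succAbove_right_injective (by rw [hdp1 c hcv, ← hzc])
          rw [← hy, iraw_par_em_inl_ne _ hyc, hupar, hy]
          exact hdp1 _ hpz
    · by_cases hi : i' = Fin.last k
      · rw [hi, iraw_out_last]
        try exact hlastv.symm
      · have hcs : Fin.castSucc (i'.castPred hi) = i' := Fin.castSucc_castPred i' hi
        rw [← hcs, iraw_out_castSucc_inl, huout]
        exact hdp1 _ (fun hh => hleg ⟨i'.castPred hi, hh⟩)

end Step

lemma card_ustr_two : Nat.card {u : UStr 2 // UGood u} = 2 := by
  classical
  have hne : ∀ w : Fin 2, w + 1 ≠ w := by decide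
  have hcover : ∀ x w : Fin 2, x ≠ w → x = w + 1 := by decide
  have E2 : {u : UStr 2 // UGood u} ≃ Fin 2 :=
    { toFun := fun u => u.1.w
      invFun := fun w =>
        ⟨⟨w, fun _ => w, fun _ => w + 1⟩, by
          refine ⟨rfl, fun v => ⟨1, rfl⟩, fun v => ?_⟩
          by_cases hv : v = w
          · subst hv
            rw [if_pos rfl]
            have hc : ccount (⟨v, fun _ => v, fun _ => v + 1⟩ : UStr 2) v = 1 := by
              refine natCard_one ⟨v + 1, ⟨hne v, rfl⟩, ?_⟩
              intro y hy
              exact hcover y v hy.1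
            have hl : lcount (⟨v, fun _ => v, fun _ => v + 1⟩ : UStr 2) v = 0 :=
              natCard_zero (fun i hi => hne v hi)
            rw [hc, hl]
          · rw [if_neg hv]
            have hc : ccount (⟨w, fun _ => w, fun _ => w + 1⟩ : UStr 2) v = 0 :=
              natCard_zero (fun x hx => hv (hx.2.symm))
            have hl : lcount (⟨w, fun _ => w, fun _ => w + 1⟩ : UStr 2) v = 2 := by
              have : ∀ i : Fin 2, (⟨w, fun _ => w, fun _ => w + 1⟩ : UStr 2).out i = v :=
                fun i => (hcover v w hv).symm
              rw [lcount, Nat.card_congr (Equiv.subtypeUnivEquiv this)]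
              simp
            rw [hc, hl]⟩
      left_inv := by
        rintro ⟨u, hu⟩
        refine Subtype.ext (ustr_ext rfl ?_ ?_)
        · funext x
          show u.w = u.par x
          symm
          by_cases hx : x = u.w
          · rw [hx, hu.1]
          · by_contra h
            have h1 := hcover (u.par x) u.w h
            have h2 := hcover x u.w hx
            rw [← h2] at h1
            exact upar_ne_self hu hx h1
        · funext i
          show u.w + 1 = u.out i
          exact (hcover _ _ (ugood_out_ne le_rfl hu i)).symm
      right_inv := fun w => rfl }
  rw [Nat.card_congr E2]
  simp

theorem card_ustr {k : ℕ} (hk : 2 ≤ k) :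
    Nat.card {u : UStr k // UGood u}
      = Nat.doubleFactorial (2 * k - 3) * Nat.factorial k := by
  induction k, hk using Nat.le_induction with
  | base => rw [card_ustr_two]; rfl
  | succ k hk IH =>
      classical
      let F : ({u : UStr k // UGood u} × Fin (k + 1) × (Fin (k - 1) ⊕ Fin k))
          → {u' : UStr (k + 1) // UGood u'} :=
        fun t => ⟨iraw t.1.1 t.2.1 t.2.2, ugood_iraw t.1.2⟩
      have hbij : Function.Bijective F := by
        constructor
        · rintro ⟨⟨u1, h1⟩, v1, p1⟩ ⟨⟨u2, h2⟩, v2, p2⟩ h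
          obtain ⟨hu, hv, hp⟩ := iraw_injective (congrArg Subtype.val h)
          exact Prod.ext (Subtype.ext hu) (Prod.ext hv hp)
        · rintro ⟨u', hu'⟩
          obtain ⟨u, v, p, heq⟩ := iraw_surjective (by omega) hu'
          have hg : UGood (iraw u v p) := by rw [heq]; exact hu'
          exact ⟨⟨⟨u, ugood_of_iraw hg⟩, v, p⟩, Subtype.ext heq⟩
      have hcard : Nat.card {u' : UStr (k + 1) // UGood u'}
          = Nat.card {u : UStr k // UGood u} * ((k + 1) * ((k - 1) + k)) := by
        rw [← Nat.card_congr (Equiv.ofBijective F hbij), Nat.card_prod, Nat.card_prod,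
          Nat.card_sum, Nat.card_eq_fintype_card (α := Fin (k + 1)),
          Nat.card_eq_fintype_card (α := Fin (k - 1)), Nat.card_eq_fintype_card (α := Fin k),
          Fintype.card_fin, Fintype.card_fin, Fintype.card_fin]
      rw [hcard, IH]
      have h1 : 2 * (k + 1) - 3 = (2 * k - 3) + 2 := by omega
      have h3 : (k - 1) + k = 2 * k - 1 := by omega
      rw [h1, Nat.doubleFactorial_add_two, Nat.factorial_succ, h3]
      have h2 : 2 * k - 3 + 2 = 2 * k - 1 := by omega
      rw [h2]
      ring

end TProof

/-- For k ≥ 2, the number of k-vertex contractible semistable decorated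
trees with k outward legs and two inward legs is `t_{k,2}(k) = (2k−3)‼`. -/
theorem tcount_k_two_k (k : ℕ) (hk : 2 ≤ k) :
    tcount k 2 k = Nat.doubleFactorial (2 * k - 3) := by
  have h1 := TProof.card_good_eq_tcount hk
  have h2 := TProof.card_good_eq_ustr hk
  have h3 := TProof.card_ustr hk
  have hfac : 0 < Nat.factorial k * Nat.factorial (k - 1) :=
    Nat.mul_pos (Nat.factorial_pos _) (Nat.factorial_pos _)
  have : tcount k 2 k * (Nat.factorial k * Nat.factorial (k - 1))
      = Nat.doubleFactorial (2 * k - 3) * (Nat.factorial k * Nat.factorial (k - 1)) := by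
    rw [← h1, h2, h3]; ring
  exact Nat.eq_of_mul_eq_mul_right hfac this
end

section
/- For k, m ≥ 2, the number of 2-vertex contractible semistable decorated trees with outward legs labeled a₁,…,a_k and inward legs labeled b̄₁,…,b̄_m is t_{k,m}(2) = 2^k + 2^m − k − m − 3. -/
open Relation

namespace LabTree
variable {k m n : ℕ}

theorem isoRel_refl (T : LabTree k m n) : IsoRel T T :=
  ⟨Equiv.refl _, Equiv.refl _, fun _ => rfl, fun _ => rfl, fun _ => rfl, fun _ => rfl⟩

theorem isoRel_symm {T T' : LabTree k m n} (h : IsoRel T T') : IsoRel T' T := by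
  obtain ⟨σ, τ, h1, h2, h3, h4⟩ := h
  refine ⟨σ.symm, τ.symm, fun e => ?_, fun e => ?_, fun i => ?_, fun j => ?_⟩
  · have := h1 (τ.symm e); simp at this; rw [this]; simp
  · have := h2 (τ.symm e); simp at this; rw [this]; simp
  · rw [h3 i]; simp
  · rw [h4 j]; simp

theorem isoRel_trans {T T' T'' : LabTree k m n} (h : IsoRel T T') (h' : IsoRel T' T'') :
    IsoRel T T'' := by
  obtain ⟨σ, τ, h1, h2, h3, h4⟩ := h
  obtain ⟨σ', τ', g1, g2, g3, g4⟩ := h'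
  exact ⟨σ.trans σ', τ.trans τ', fun e => by simp [g1, h1], fun e => by simp [g2, h2],
    fun i => by simp [g3, h3], fun j => by simp [g4, h4]⟩

theorem degOut_iso {T T' : LabTree k m n} (σ : Fin n ≃ Fin n) (τ : Fin (n-1) ≃ Fin (n-1))
    (h1 : ∀ e, T'.src (τ e) = σ (T.src e)) (h3 : ∀ i, T'.out i = σ (T.out i)) (v : Fin n) :
    T'.degOut (σ v) = T.degOut v := by
  unfold degOut
  congr 1
  · exact (Nat.card_congr (τ.subtypeEquiv fun e => by rw [h1 e, σ.apply_eq_iff_eq])).symm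
  · exact (Nat.card_congr ((Equiv.refl _).subtypeEquiv fun i => by
      show T.out i = v ↔ T'.out i = σ v
      rw [h3 i, σ.apply_eq_iff_eq])).symm

theorem degIn_iso {T T' : LabTree k m n} (σ : Fin n ≃ Fin n) (τ : Fin (n-1) ≃ Fin (n-1))
    (h2 : ∀ e, T'.tgt (τ e) = σ (T.tgt e)) (h4 : ∀ j, T'.inn j = σ (T.inn j)) (v : Fin n) :
    T'.degIn (σ v) = T.degIn v := by
  unfold degIn
  congr 1
  · exact (Nat.card_congr (τ.subtypeEquiv fun e => by rw [h2 e, σ.apply_eq_iff_eq])).symm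
  · exact (Nat.card_congr ((Equiv.refl _).subtypeEquiv fun j => by
      show T.inn j = v ↔ T'.inn j = σ v
      rw [h4 j, σ.apply_eq_iff_eq])).symm

theorem good_of_iso {T T' : LabTree k m n} (h : IsoRel T T') (hT : T.Good) : T'.Good := by
  obtain ⟨σ, τ, h1, h2, h3, h4⟩ := h
  obtain ⟨hconn, hss, hcon⟩ := hT
  refine ⟨fun a b => ?_, fun v => ?_, fun e => ?_⟩
  · have hadj : ∀ x y, T.UAdj x y → T'.UAdj (σ x) (σ y) := by
      rintro x y ⟨e, ⟨ha, hb⟩ | ⟨ha, hb⟩⟩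
      · exact ⟨τ e, Or.inl ⟨by rw [h1, ha], by rw [h2, hb]⟩⟩
      · exact ⟨τ e, Or.inr ⟨by rw [h1, ha], by rw [h2, hb]⟩⟩
    have := (hconn (σ.symm a) (σ.symm b)).lift σ hadj
    simpa [Function.onFun] using this
  · have := hss (σ.symm v)
    rwa [← degOut_iso σ τ h1 h3 (σ.symm v), ← degIn_iso σ τ h2 h4 (σ.symm v),
      σ.apply_symm_apply] at this
  · obtain ⟨hne, hdeg⟩ := hcon (τ.symm e)
    constructor
    · rw [← τ.apply_symm_apply e, h1, h2]
      exact fun hh => hne (σ.injective hh)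
    · rw [← τ.apply_symm_apply e, h1, h2,
        degOut_iso σ τ h1 h3, degIn_iso σ τ h2 h4]
      exact hdeg
end LabTree

namespace LabTree
variable {k m : ℕ}

/-- count of legs attached to vertex 0 -/
def cnt0 {l : ℕ} (f : Fin l → Fin 2) : ℕ := (Finset.univ.filter (fun i => f i = 0)).card

lemma cnt0_le {l : ℕ} (f : Fin l → Fin 2) : cnt0 f ≤ l := by
  simpa [cnt0] using Finset.card_filter_le Finset.univ (fun i => f i = 0)

lemma natcard0 {l : ℕ} (f : Fin l → Fin 2) : Nat.card {i // f i = 0} = cnt0 f := by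
  simp [Nat.card_eq_fintype_card, Fintype.card_subtype, cnt0]

lemma natcard1 {l : ℕ} (f : Fin l → Fin 2) : Nat.card {i // f i = 1} = l - cnt0 f := by
  have h : ∀ x : Fin 2, x = 1 ↔ ¬ (x = 0) := by decide
  have := Finset.card_filter_add_card_filter_not (s := (Finset.univ : Finset (Fin l)))
    (fun i => f i = 0)
  rw [Nat.card_eq_fintype_card, Fintype.card_subtype]
  have h2 : Finset.filter (fun i => f i = 1) Finset.univ
      = Finset.filter (fun i => ¬ (f i = 0)) Finset.univ :=
    Finset.filter_congr (fun i _ => by rw [h])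
  rw [h2]
  simp only [Finset.card_univ, Fintype.card_fin] at this
  unfold cnt0
  omega

lemma cnt0_eq_zero_iff {l : ℕ} (f : Fin l → Fin 2) : cnt0 f = 0 ↔ f = fun _ => 1 := by
  constructor
  · intro h
    funext i
    have : i ∉ Finset.univ.filter (fun i => f i = 0) := by
      rw [Finset.card_eq_zero.mp h]; simp
    simp at this
    omega
  · intro h; subst h; simp [cnt0]

lemma cnt0_eq_top_iff {l : ℕ} (f : Fin l → Fin 2) : cnt0 f = l ↔ f = fun _ => 0 := by
  constructor
  · intro h
    funext i
    have : Finset.univ.filter (fun i => f i = 0) = Finset.univ := by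
      apply Finset.eq_univ_of_card; simpa [cnt0] using h
    have hi : i ∈ Finset.univ.filter (fun i => f i = 0) := by
      rw [this]; exact Finset.mem_univ i
    simpa using hi
  · intro h; subst h; simp [cnt0]

/-- The normalized 2-vertex tree. -/
def Tmk (f : Fin k → Fin 2) (g : Fin m → Fin 2) : LabTree k m 2 :=
  ⟨fun _ => 0, fun _ => 1, f, g⟩

lemma card_edge (c v : Fin 2) : Nat.card {_e : Fin (2-1) // c = v} = if c = v then 1 else 0 := by
  rcases eq_or_ne c v with h | h <;>
    simp [h, Nat.card_eq_fintype_card, Fintype.card_subtype]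

lemma degOut_tmk (f : Fin k → Fin 2) (g : Fin m → Fin 2) (v : Fin 2) :
    (Tmk f g).degOut v = (if v = 0 then 1 else 0) + Nat.card {i // f i = v} := by
  unfold degOut Tmk
  simp only
  rw [card_edge]
  congr 1
  by_cases h : v = 0 <;> simp [h, eq_comm]

lemma degIn_tmk (f : Fin k → Fin 2) (g : Fin m → Fin 2) (v : Fin 2) :
    (Tmk f g).degIn v = (if v = 1 then 1 else 0) + Nat.card {j // g j = v} := by
  unfold degIn Tmk
  simp only
  rw [card_edge]
  congr 1
  by_cases h : v = 1 <;> simp [h, eq_comm]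

lemma good_tmk_iff (hk : 2 ≤ k) (hm : 2 ≤ m) (f : Fin k → Fin 2) (g : Fin m → Fin 2) :
    (Tmk f g).Good ↔ ((cnt0 f = 0 ∧ 2 ≤ cnt0 g) ∨ (cnt0 g = m ∧ cnt0 f + 2 ≤ k)) := by
  have hAk := cnt0_le f
  have hBm := cnt0_le g
  have d1 : (Tmk f g).degOut 0 = 1 + cnt0 f := by rw [degOut_tmk, natcard0]; norm_num
  have d2 : (Tmk f g).degOut 1 = k - cnt0 f := by rw [degOut_tmk, natcard1]; norm_num
  have d3 : (Tmk f g).degIn 0 = cnt0 g := by rw [degIn_tmk, natcard0]; norm_num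
  have d4 : (Tmk f g).degIn 1 = 1 + (m - cnt0 g) := by rw [degIn_tmk, natcard1]; norm_num
  constructor
  · rintro ⟨-, hss, hcon⟩
    have h0 := hss 0
    have h1 := hss 1
    have he := hcon ⟨0, by omega⟩
    rw [d1, d3] at h0
    rw [d2, d4] at h1
    have he2 := he.2
    rw [show (Tmk f g).src ⟨0, by omega⟩ = 0 from rfl,
        show (Tmk f g).tgt ⟨0, by omega⟩ = 1 from rfl, d1, d4] at he2
    omega
  · intro h
    refine ⟨?_, Fin.forall_fin_two.mpr ⟨?_, ?_⟩, fun e => ?_⟩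
    · have hadj : UAdj (Tmk f g) 0 1 := ⟨⟨0, by omega⟩, Or.inl ⟨rfl, rfl⟩⟩
      have hadj' : UAdj (Tmk f g) 1 0 := ⟨⟨0, by omega⟩, Or.inr ⟨rfl, rfl⟩⟩
      intro a b
      fin_cases a <;> fin_cases b
      · exact .refl
      · exact .single hadj
      · exact .single hadj'
      · exact .refl
    · rw [d1, d3]; omega
    · rw [d2, d4]; omega
    · have hsrc : (Tmk f g).src e = 0 := rfl
      have htgt : (Tmk f g).tgt e = 1 := rfl
      refine ⟨by rw [hsrc, htgt]; decide, ?_⟩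
      rw [hsrc, htgt, d1, d4]
      omega

end LabTree

namespace LabTree
variable {k m : ℕ}

lemma rel_equiv : Equivalence (fun T T' : {T : LabTree k m 2 // T.Good} => IsoRel T.1 T'.1) :=
  ⟨fun T => isoRel_refl T.1, isoRel_symm, isoRel_trans⟩

lemma fin21_eq (e : Fin (2-1)) : e = ⟨0, by omega⟩ := by
  have := e.2; exact Fin.ext (by omega)

lemma tmk_eq_of_iso {f f' : Fin k → Fin 2} {g g' : Fin m → Fin 2}
    (h : IsoRel (Tmk f g) (Tmk f' g')) : f = f' ∧ g = g' := by
  obtain ⟨σ, τ, h1, h2, h3, h4⟩ := h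
  have hs : σ 0 = 0 := (h1 ⟨0, by omega⟩).symm
  have ht : σ 1 = 1 := (h2 ⟨0, by omega⟩).symm
  have hσ : ∀ v : Fin 2, σ v = v := Fin.forall_fin_two.mpr ⟨hs, ht⟩
  exact ⟨funext fun i => ((h3 i).trans (hσ _)).symm,
    funext fun j => ((h4 j).trans (hσ _)).symm⟩

lemma card_quot_eq :
    Nat.card (Quot (fun T T' : {T : LabTree k m 2 // T.Good} => IsoRel T.1 T'.1)) =
    Nat.card {p : (Fin k → Fin 2) × (Fin m → Fin 2) // (Tmk p.1 p.2).Good} := by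
  refine (Nat.card_eq_of_bijective
    (fun p => Quot.mk _ (⟨Tmk p.1.1 p.1.2, p.2⟩ : {T : LabTree k m 2 // T.Good})) ⟨?_, ?_⟩).symm
  · intro p p' h
    have h2 := (rel_equiv.eqvGen_iff).mp (Quot.eqvGen_exact h)
    obtain ⟨hf, hg⟩ := tmk_eq_of_iso h2
    exact Subtype.ext (Prod.ext hf hg)
  · intro q
    induction q using Quot.ind with
    | _ a =>
      obtain ⟨T, hT⟩ := a
      have hne : T.src ⟨0, by omega⟩ ≠ T.tgt ⟨0, by omega⟩ := (hT.2.2 ⟨0, by omega⟩).1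
      have hdec : ∀ x y : Fin 2, x ≠ y → (x = 0 ∧ y = 1) ∨ (x = 1 ∧ y = 0) := by decide
      rcases hdec _ _ hne with ⟨hs, ht⟩ | ⟨hs, ht⟩
      · have hT' : T = Tmk T.out T.inn := by
          obtain ⟨s, t, o, i⟩ := T
          simp only [Tmk, mk.injEq] at hs ht ⊢
          refine ⟨funext fun e => ?_, funext fun e => ?_, by trivial⟩
          · rw [fin21_eq e]; exact hs
          · rw [fin21_eq e]; exact ht
        exact ⟨⟨(T.out, T.inn), hT' ▸ hT⟩, congrArg (Quot.mk _) (Subtype.ext hT'.symm)⟩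
      · set sw : Fin 2 ≃ Fin 2 := Equiv.swap 0 1 with hswdef
        have hiso : IsoRel T (Tmk (fun i => sw (T.out i)) (fun j => sw (T.inn j))) := by
          refine ⟨sw, Equiv.refl _, fun e => ?_, fun e => ?_, fun i => rfl, fun j => rfl⟩
          · show (0 : Fin 2) = sw (T.src e)
            rw [fin21_eq e, hs]; decide
          · show (1 : Fin 2) = sw (T.tgt e)
            rw [fin21_eq e, ht]; decide
        have hgood := good_of_iso hiso hT
        exact ⟨⟨(fun i => sw (T.out i), fun j => sw (T.inn j)), hgood⟩,
          Quot.sound (isoRel_symm hiso)⟩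

end LabTree

namespace LabTree
open Finset
variable {k m : ℕ}

/-- functions to `Fin 2` correspond to subsets (the fiber of `0`). -/
def toSet {l : ℕ} : (Fin l → Fin 2) ≃ Finset (Fin l) where
  toFun f := univ.filter (fun i => f i = 0)
  invFun s := fun i => if i ∈ s then 0 else 1
  left_inv f := by
    funext i
    by_cases h : f i = 0 <;> simp [h]
    have : ∀ x : Fin 2, ¬ x = 0 → x = 1 := by decide
    exact (this _ h).symm
  right_inv s := by
    ext i
    by_cases h : i ∈ s <;> simp [h]

lemma cnt0_toSet {l : ℕ} (f : Fin l → Fin 2) : cnt0 f = (toSet f).card := rfl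

lemma filter_cnt_card (l : ℕ) (p : ℕ → Prop) [DecidablePred p] :
    (univ.filter (fun f : Fin l → Fin 2 => p (cnt0 f))).card =
    (univ.filter (fun s : Finset (Fin l) => p s.card)).card := by
  rw [← Fintype.card_subtype, ← Fintype.card_subtype]
  exact Fintype.card_congr (Equiv.subtypeEquiv toSet (fun f => by rw [cnt0_toSet]))

lemma filter_card_eq (l j : ℕ) :
    (univ.filter (fun s : Finset (Fin l) => s.card = j)).card = l.choose j := by
  rw [← Finset.powerset_univ, ← Finset.powersetCard_eq_filter, Finset.card_powersetCard,
    Finset.card_univ, Fintype.card_fin]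

lemma count_ge2 (hm : 2 ≤ m) :
    (univ.filter (fun g : Fin m → Fin 2 => 2 ≤ cnt0 g)).card = 2 ^ m - (m + 1) := by
  rw [filter_cnt_card m (fun b => 2 ≤ b)]
  have htot := Finset.card_filter_add_card_filter_not
    (s := (univ : Finset (Finset (Fin m)))) (fun s => 2 ≤ s.card)
  have hneg : (univ.filter (fun s : Finset (Fin m) => ¬ 2 ≤ s.card)).card = m + 1 := by
    have : (univ.filter (fun s : Finset (Fin m) => ¬ 2 ≤ s.card))
        = univ.filter (fun s : Finset (Fin m) => s.card = 0 ∨ s.card = 1) :=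
      Finset.filter_congr (fun s _ => by constructor <;> intro h <;> omega)
    rw [this, Finset.filter_or, Finset.card_union_of_disjoint, filter_card_eq, filter_card_eq,
      Nat.choose_zero_right, Nat.choose_one_right]
    · omega
    · rw [Finset.disjoint_left]
      intro s hs hs'
      simp only [Finset.mem_filter] at hs hs'
      omega
  rw [Finset.card_univ, Fintype.card_finset, Fintype.card_fin] at htot
  omega

lemma count_le (hk : 2 ≤ k) :
    (univ.filter (fun f : Fin k → Fin 2 => cnt0 f + 2 ≤ k)).card = 2 ^ k - (k + 1) := by
  rw [filter_cnt_card k (fun a => a + 2 ≤ k)]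
  have htot := Finset.card_filter_add_card_filter_not
    (s := (univ : Finset (Finset (Fin k)))) (fun s => s.card + 2 ≤ k)
  have hneg : (univ.filter (fun s : Finset (Fin k) => ¬ s.card + 2 ≤ k)).card = k + 1 := by
    have : (univ.filter (fun s : Finset (Fin k) => ¬ s.card + 2 ≤ k))
        = univ.filter (fun s : Finset (Fin k) => s.card = k - 1 ∨ s.card = k) :=
      Finset.filter_congr (fun s _ => by
        have hb : s.card ≤ k := by
          have := Finset.card_le_univ s
          simpa using this
        constructor <;> intro h <;> omega)
    rw [this, Finset.filter_or, Finset.card_union_of_disjoint, filter_card_eq, filter_card_eq,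
      Nat.choose_self]
    · have h1 : k.choose (k - 1) = k := by
        have h2 := Nat.choose_symm (n := k) (k := 1) (by omega)
        rwa [Nat.choose_one_right] at h2
      omega
    · rw [Finset.disjoint_left]
      intro s hs hs'
      simp only [Finset.mem_filter] at hs hs'
      omega
  rw [Finset.card_univ, Fintype.card_finset, Fintype.card_fin] at htot
  omega

lemma count_single0 : (univ.filter (fun f : Fin k → Fin 2 => cnt0 f = 0)).card = 1 := by
  rw [filter_cnt_card k (fun a => a = 0), filter_card_eq, Nat.choose_zero_right]

lemma count_singlem : (univ.filter (fun g : Fin m → Fin 2 => cnt0 g = m)).card = 1 := by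
  rw [filter_cnt_card m (fun b => b = m), filter_card_eq, Nat.choose_self]

lemma count_main (hk : 2 ≤ k) (hm : 2 ≤ m) :
    Nat.card {p : (Fin k → Fin 2) × (Fin m → Fin 2) // (Tmk p.1 p.2).Good} =
    (2 ^ k - (k + 1)) + (2 ^ m - (m + 1)) - 1 := by
  classical
  rw [Nat.card_eq_fintype_card, Fintype.card_subtype]
  have hcongr : (univ.filter (fun p : (Fin k → Fin 2) × (Fin m → Fin 2) => (Tmk p.1 p.2).Good))
      = univ.filter (fun p => (cnt0 p.1 = 0 ∧ 2 ≤ cnt0 p.2) ∨ (cnt0 p.1 + 2 ≤ k ∧ cnt0 p.2 = m)) :=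
    Finset.filter_congr (fun p _ => by rw [good_tmk_iff hk hm]; tauto)
  rw [hcongr, Finset.filter_or]
  have hunion := Finset.card_union_add_card_inter
    (univ.filter (fun p : (Fin k → Fin 2) × (Fin m → Fin 2) => cnt0 p.1 = 0 ∧ 2 ≤ cnt0 p.2))
    (univ.filter (fun p : (Fin k → Fin 2) × (Fin m → Fin 2) => cnt0 p.1 + 2 ≤ k ∧ cnt0 p.2 = m))
  have c1 : (univ.filter
      (fun p : (Fin k → Fin 2) × (Fin m → Fin 2) => cnt0 p.1 = 0 ∧ 2 ≤ cnt0 p.2)).card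
      = 2 ^ m - (m + 1) := by
    rw [← Finset.univ_product_univ, Finset.filter_product
        (fun f : Fin k → Fin 2 => cnt0 f = 0) (fun g : Fin m → Fin 2 => 2 ≤ cnt0 g),
      Finset.card_product, count_single0, count_ge2 hm, one_mul]
  have c2 : (univ.filter
      (fun p : (Fin k → Fin 2) × (Fin m → Fin 2) => cnt0 p.1 + 2 ≤ k ∧ cnt0 p.2 = m)).card
      = 2 ^ k - (k + 1) := by
    rw [← Finset.univ_product_univ, Finset.filter_product
        (fun f : Fin k → Fin 2 => cnt0 f + 2 ≤ k) (fun g : Fin m → Fin 2 => cnt0 g = m),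
      Finset.card_product, count_le hk, count_singlem, mul_one]
  have cint : ((univ.filter
      (fun p : (Fin k → Fin 2) × (Fin m → Fin 2) => cnt0 p.1 = 0 ∧ 2 ≤ cnt0 p.2)) ∩
      (univ.filter
      (fun p : (Fin k → Fin 2) × (Fin m → Fin 2) => cnt0 p.1 + 2 ≤ k ∧ cnt0 p.2 = m))).card
      = 1 := by
    rw [← Finset.filter_and]
    have : (univ.filter (fun p : (Fin k → Fin 2) × (Fin m → Fin 2) =>
        (cnt0 p.1 = 0 ∧ 2 ≤ cnt0 p.2) ∧ (cnt0 p.1 + 2 ≤ k ∧ cnt0 p.2 = m)))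
        = univ.filter (fun p => cnt0 p.1 = 0 ∧ cnt0 p.2 = m) :=
      Finset.filter_congr (fun p _ => by constructor <;> intro h <;> omega)
    rw [this, ← Finset.univ_product_univ, Finset.filter_product
        (fun f : Fin k → Fin 2 => cnt0 f = 0) (fun g : Fin m → Fin 2 => cnt0 g = m),
      Finset.card_product, count_single0, count_singlem]
  omega

lemma two_add_le (l : ℕ) (hl : 2 ≤ l) : l + 2 ≤ 2 ^ l := by
  have h1 : l - 1 < 2 ^ (l - 1) := Nat.lt_two_pow_self (n := l - 1)
  have h2 : 2 ^ l = 2 * 2 ^ (l - 1) := by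
    rw [← pow_succ']
    congr 1
    omega
  omega

end LabTree

/-- For k, m ≥ 2, `t_{k,m}(2) = 2^k + 2^m − k − m − 3`. -/
theorem tcount_two_vertices (k m : ℕ) (hk : 2 ≤ k) (hm : 2 ≤ m) :
    (tcount k m 2 : ℤ) = 2 ^ k + 2 ^ m - k - m - 3 := by
  have h : tcount k m 2 = (2 ^ k - (k + 1)) + (2 ^ m - (m + 1)) - 1 := by
    rw [tcount, LabTree.card_quot_eq, LabTree.count_main hk hm]
  have h1 := LabTree.two_add_le k hk
  have h2 := LabTree.two_add_le m hm
  rw [h]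
  zify [Nat.le_sub_iff_add_le, h1, h2, show k + 1 ≤ 2 ^ k by omega,
    show m + 1 ≤ 2 ^ m by omega, show 1 ≤ 2 ^ k - (k + 1) + (2 ^ m - (m + 1)) by omega]
  push_cast
  ring
end
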